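/- If f : ¬N[sⁿ(0)] ⊢ (f)m̲ : ⊥ is derivable in AF2_⊥ (for Church numerals m̲, n̲ and an adequate set of equations), then n = m. -/

import Mathlib

/- Untyped λ-calculus with de Bruijn indices, head reduction, Church numerals. -/

inductive Lam : Type
  | var : ℕ → Lam
  | app : Lam → Lam → Lam
  | lam : Lam → Lam
deriving DecidableEq, Repr

namespace Lam

/-- Shift free variables `≥ c` up by 1. -/
def lift (c : ℕ) : Lam → Lam
  | var n => if n < c then var n else var (n + 1)
  | app s t => app (s.lift c) (t.lift c)
  | lam t => lam (t.lift (c + 1))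

/-- Push a substitution under a binder. -/
def up (σ : ℕ → Lam) : ℕ → Lam
  | 0 => var 0
  | n + 1 => (σ n).lift 0

/-- Capture-avoiding simultaneous substitution. -/
def subst (σ : ℕ → Lam) : Lam → Lam
  | var n => σ n
  | app s t => app (s.subst σ) (t.subst σ)
  | lam t => lam (t.subst (up σ))

/-- `t.subst0 u` is `t[u/0]`, the β-contractum substitution. -/
def subst0 (t u : Lam) : Lam :=
  t.subst (fun n => match n with | 0 => u | n + 1 => var n)

/-- `m` occurs free in the term. -/
def FreeIn (m : ℕ) : Lam → Prop
  | var n => n = m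
  | app s t => s.FreeIn m ∨ t.FreeIn m
  | lam t => t.FreeIn (m + 1)

/-- A closed λ-term. -/
def Closed (t : Lam) : Prop := ∀ m, ¬ t.FreeIn m

end Lam

/-- One-step β-reduction (anywhere in the term). -/
inductive Beta : Lam → Lam → Prop
  | beta (t u) : Beta (.app (.lam t) u) (t.subst0 u)
  | appL {s s'} (t) : Beta s s' → Beta (.app s t) (.app s' t)
  | appR {t t'} (s) : Beta t t' → Beta (.app s t) (.app s t')
  | lam {t t'} : Beta t t' → Beta (.lam t) (.lam t')

/-- β-equivalence `≃β`. -/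
def BetaEq : Lam → Lam → Prop := Relation.EqvGen Beta

/-- A term in (β-)normal form. -/
def NormalForm (t : Lam) : Prop := ∀ u, ¬ Beta t u

/-- One step of head reduction: reduce the head redex. -/
inductive HStep : Lam → Lam → Prop
  | beta (t u) : HStep (.app (.lam t) u) (t.subst0 u)
  | lam {t t'} : HStep t t' → HStep (.lam t) (.lam t')
  | app {t t'} (u) : HStep t t' → (∀ s, t ≠ .lam s) → HStep (.app t u) (.app t' u)

/-- `HRedN k u v` : `u ≻ v` by a head reduction of length `h(u,v) = k`. -/
inductive HRedN : ℕ → Lam → Lam → Prop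
  | refl (t) : HRedN 0 t t
  | step {k t u v} : HStep t u → HRedN k u v → HRedN (k + 1) t v

/-- `u ≻ v` : `v` is obtained from `u` by head reduction. -/
def HRed (t u : Lam) : Prop := ∃ k, HRedN k t u

/-- Head normal form: no head redex. -/
def HeadNormal (t : Lam) : Prop := ∀ u, ¬ HStep t u

/-- Solvable: the head reduction terminates. -/
def Solvable (t : Lam) : Prop := ∃ v, HRed t v ∧ HeadNormal v

/-- `(t)u₁…uₙ` : iterated application. -/
def appList : Lam → List Lam → Lam
  | t, [] => t
  | t, u :: us => appList (t.app u) us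

/-- `(f)ⁿ x` with `x = var 1`, `f = var 0`. -/
def churchBody : ℕ → Lam
  | 0 => .var 1
  | n + 1 => .app (.var 0) (churchBody n)

/-- Church numeral `n̲ = λx λf (f)ⁿ x`. -/
def church (n : ℕ) : Lam := .lam (.lam (churchBody n))

/-- `0̲ = λx λf x`. -/
def czero : Lam := .lam (.lam (.var 1))

/-- `s̲ = λn λx λf (f)((n)x)f`. -/
def csucc : Lam := .lam (.lam (.lam (.app (.var 0) (.app (.app (.var 2) (.var 1)) (.var 0)))))

/-- `(s̲)ⁿ 0̲`. -/
def succIter : ℕ → Lam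
  | 0 => czero
  | n + 1 => .app csucc (succIter n)

/-- `G = λx λy (x) λz (y)(s̲)z`. -/
def Gop : Lam := .lam (.lam (.app (.var 1) (.lam (.app (.var 1) (.app csucc (.var 0))))))

/-- `δ = λf (f)0̲`. -/
def deltaOp : Lam := .lam (.app (.var 0) czero)

/-- `T₁ = λn ((n)δ)G`. -/
def T1 : Lam := .lam (.app (.app (.var 0) deltaOp) Gop)

/-- `F = λx λy (x)(s̲)y`. -/
def Fop : Lam := .lam (.lam (.app (.var 1) (.app csucc (.var 0))))

/-- `T₂ = λn λf (((n)f)F)0̲`. -/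
def T2 : Lam := .lam (.lam (.app (.app (.app (.var 1) (.var 0)) Fop) czero))

/-- `θ₀ = λx λf λz (x)(λd z)(λx x)`. -/
def theta0 : Lam := .lam (.lam (.lam (.app (.app (.var 2) (.lam (.var 1))) (.lam (.var 0)))))

/-- `T` is a storage operator for the integers (the fixed variable `f` is `var 0`). -/
def IsStorage (T : Lam) : Prop :=
  ∀ n : ℕ, ∃ τ : Lam, BetaEq τ (church n) ∧
    ∀ θ : Lam, BetaEq θ (church n) →
      ∃ σ : ℕ → Lam, HRed (.app (.app T θ) (.var 0)) (.app (.var 0) (τ.subst σ))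

/- AF2 : second-order functional arithmetic over the language {0, s}.
   First-order variables are de Bruijn indices; predicate variables are named
   by a `Bool` (true = ⊥-variable of AF2⊥) and a number, each with an arity. -/

inductive Tm : Type
  | var : ℕ → Tm
  | zero : Tm
  | succ : Tm → Tm
deriving DecidableEq

namespace Tm

def liftBy (c m : ℕ) : Tm → Tm
  | var n => if n < c then var n else var (n + m)
  | zero => zero
  | succ t => succ (t.liftBy c m)

def up (σ : ℕ → Tm) : ℕ → Tm
  | 0 => var 0
  | n + 1 => (σ n).liftBy 0 1

def subst (σ : ℕ → Tm) : Tm → Tm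
  | var n => σ n
  | zero => zero
  | succ t => succ (t.subst σ)

end Tm

/-- The first-order term `sⁿ(0)`. -/
def snum : ℕ → Tm
  | 0 => .zero
  | n + 1 => .succ (snum n)

/-- Second-order formulas.  `pvar b X args` is the atomic formula `X(args)`,
`b = true` marking the special ⊥-variables of AF2⊥; `all1` binds a first-order
de Bruijn variable; `all2 b X k A` is `∀X A` for the `k`-ary predicate variable `(b,X)`. -/
inductive Fml : Type
  | pvar (b : Bool) (X : ℕ) (args : List Tm)
  | arr (A B : Fml)
  | all1 (A : Fml)
  | all2 (b : Bool) (X : ℕ) (k : ℕ) (A : Fml)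
deriving DecidableEq

/-- Absurdity `⊥ := ∀X X` (for a 0-ary predicate variable `X`). -/
def botF : Fml := .all2 false 0 0 (.pvar false 0 [])

/-- `¬A := A → ⊥`. -/
def negF (A : Fml) : Fml := A.arr botF

namespace Fml

/-- Shift first-order variables `≥ c` by `m`. -/
def lift1By (c m : ℕ) : Fml → Fml
  | pvar b X args => pvar b X (args.map (Tm.liftBy c m))
  | arr A B => arr (A.lift1By c m) (B.lift1By c m)
  | all1 A => all1 (A.lift1By (c + 1) m)
  | all2 b X k A => all2 b X k (A.lift1By c m)

/-- First-order substitution in a formula. -/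
def subst1 (σ : ℕ → Tm) : Fml → Fml
  | pvar b X args => pvar b X (args.map (Tm.subst σ))
  | arr A B => arr (A.subst1 σ) (B.subst1 σ)
  | all1 A => all1 (A.subst1 (Tm.up σ))
  | all2 b X k A => all2 b X k (A.subst1 σ)

/-- `A[u/x]` for the first-order variable `0`. -/
def substTop (u : Tm) (A : Fml) : Fml :=
  A.subst1 (fun n => match n with | 0 => u | n + 1 => Tm.var n)

/-- The predicate variable `(b, X)` occurs free. -/
def fv2 (b : Bool) (X : ℕ) : Fml → Prop
  | pvar b' X' _ => b = b' ∧ X = X'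
  | arr A B => A.fv2 b X ∨ B.fv2 b X
  | all1 A => A.fv2 b X
  | all2 b' X' _ A => ¬(b = b' ∧ X = X') ∧ A.fv2 b X

/-- Instantiate the `k` argument slots (first-order variables `0,…,k-1`) of `G` by `args`. -/
def instArgs (k : ℕ) (G : Fml) (args : List Tm) : Fml :=
  G.subst1 (fun n => if n < k then args.getD n Tm.zero else Tm.var (n - k))

/-- `A[G/X]` : substitution of the formula `G` (with argument slots `0,…,k-1`)
for the `k`-ary predicate variable `(b, X)`; `d` is the number of first-order
binders already crossed. -/
def psubst (b : Bool) (X : ℕ) (k : ℕ) (G : Fml) : ℕ → Fml → Fml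
  | d, pvar b' X' args =>
      if b = b' ∧ X = X' then instArgs k (G.lift1By k d) args else pvar b' X' args
  | d, arr A B => arr (psubst b X k G d A) (psubst b X k G d B)
  | d, all1 A => all1 (psubst b X k G (d + 1) A)
  | d, all2 b' X' m A =>
      if b = b' ∧ X = X' then all2 b' X' m A else all2 b' X' m (psubst b X k G d A)

end Fml

/-- ⊥-types : formulas ending with `⊥` or with an atom `X_⊥(t̄)`. -/
inductive IsBotFml : Fml → Prop
  | bot : IsBotFml botF
  | pvar (X args) : IsBotFml (.pvar true X args)
  | arr (A) {B} : IsBotFml B → IsBotFml (.arr A B)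
  | all1 {A} : IsBotFml A → IsBotFml (.all1 A)
  | all2 (b X k) {A} : IsBotFml A → IsBotFml (.all2 b X k A)

/-- Equational consequence of a set `E` of equations. -/
inductive EqCns (E : Set (Tm × Tm)) : Tm → Tm → Prop
  | ax {u v : Tm} (σ : ℕ → Tm) : (u, v) ∈ E → EqCns E (u.subst σ) (v.subst σ)
  | refl (t) : EqCns E t t
  | symm {u v} : EqCns E u v → EqCns E v u
  | trans {u v w} : EqCns E u v → EqCns E v w → EqCns E u w
  | succ {u v} : EqCns E u v → EqCns E u.succ v.succ

/-- `E` is adequate with the type of integers. -/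
def Adequate (E : Set (Tm × Tm)) : Prop :=
  (∀ a, ¬ EqCns E (Tm.succ a) Tm.zero) ∧
  (∀ a b, EqCns E (Tm.succ a) (Tm.succ b) → EqCns E a b)

/-- The AF2 type system (Curry style, de Bruijn contexts, equational rule for `E`). -/
inductive DerA (E : Set (Tm × Tm)) : List Fml → Lam → Fml → Prop
  | var (Γ n A) : Γ[n]? = some A → DerA E Γ (.var n) A
  | lamI {Γ A t B} : DerA E (A :: Γ) t B → DerA E Γ (.lam t) (.arr A B)
  | appE {Γ u v A B} : DerA E Γ u (.arr A B) → DerA E Γ v A → DerA E Γ (.app u v) B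
  | all1I {Γ t A} : DerA E (Γ.map (Fml.lift1By 0 1)) t A → DerA E Γ t (.all1 A)
  | all1E {Γ t A} (u) : DerA E Γ t (.all1 A) → DerA E Γ t (A.substTop u)
  | all2I {Γ t A} (b X k) : DerA E Γ t A → (∀ B ∈ Γ, ¬ B.fv2 b X) →
      DerA E Γ t (.all2 b X k A)
  | all2E {Γ t b X k A} (G) : DerA E Γ t (.all2 b X k A) →
      DerA E Γ t (Fml.psubst b X k G 0 A)
  | eqr {Γ : List Fml} {t : Lam} {A : Fml} {u v : Tm} : DerA E Γ t (A.substTop u) → EqCns E u v →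
      DerA E Γ t (A.substTop v)

/-- The AF2⊥ type system: as AF2, but a ⊥-variable may only be instantiated
by a ⊥-type. -/
inductive DerB (E : Set (Tm × Tm)) : List Fml → Lam → Fml → Prop
  | var (Γ n A) : Γ[n]? = some A → DerB E Γ (.var n) A
  | lamI {Γ A t B} : DerB E (A :: Γ) t B → DerB E Γ (.lam t) (.arr A B)
  | appE {Γ u v A B} : DerB E Γ u (.arr A B) → DerB E Γ v A → DerB E Γ (.app u v) B
  | all1I {Γ t A} : DerB E (Γ.map (Fml.lift1By 0 1)) t A → DerB E Γ t (.all1 A)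
  | all1E {Γ t A} (u) : DerB E Γ t (.all1 A) → DerB E Γ t (A.substTop u)
  | all2I {Γ t A} (b X k) : DerB E Γ t A → (∀ B ∈ Γ, ¬ B.fv2 b X) →
      DerB E Γ t (.all2 b X k A)
  | all2E {Γ t b X k A} (G) : DerB E Γ t (.all2 b X k A) →
      (b = true → IsBotFml G) → DerB E Γ t (Fml.psubst b X k G 0 A)
  | eqr {Γ : List Fml} {t : Lam} {A : Fml} {u v : Tm} : DerB E Γ t (A.substTop u) → EqCns E u v →
      DerB E Γ t (A.substTop v)

/-- `N[t] = ∀X{X(0), ∀y(X(y)→X(sy)) → X(t)}`, with `b` choosing the kind of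
the quantified (unary) predicate variable. -/
def NtyGen (b : Bool) (t : Tm) : Fml :=
  .all2 b 0 1 (.arr (.pvar b 0 [Tm.zero])
    (.arr (.all1 (.arr (.pvar b 0 [Tm.var 0]) (.pvar b 0 [Tm.succ (Tm.var 0)])))
      (.pvar b 0 [t])))

/-- The type `N[t]` of integers. -/
def Nty (t : Tm) : Fml := NtyGen false t

/-- `N^⊥[t]`, quantifying over a ⊥-variable. -/
def Nbot (t : Tm) : Fml := NtyGen true t

/-- The simple Gödel translation `N*[t] = ∀X{¬X(0), ∀y(¬X(y)→¬X(sy)) → ¬X(t)}`. -/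
def Nstar (t : Tm) : Fml :=
  .all2 false 0 1 (.arr (negF (.pvar false 0 [Tm.zero]))
    (.arr (.all1 (.arr (negF (.pvar false 0 [Tm.var 0]))
        (negF (.pvar false 0 [Tm.succ (Tm.var 0)]))))
      (negF (.pvar false 0 [t]))))

/-- `∀x{N*[x] → ¬¬N[x]}`. -/
def specStar : Fml := .all1 ((Nstar (Tm.var 0)).arr (negF (negF (Nty (Tm.var 0)))))

/-- `∀x{N^⊥[x] → ¬¬N[x]}`. -/
def specBot : Fml := .all1 ((Nbot (Tm.var 0)).arr (negF (negF (Nty (Tm.var 0)))))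


/-! ### Auxiliary development -/

namespace AF2Aux

open Tm

/-- Iterated `Tm.up`. -/
def upI : ℕ → (ℕ → Tm) → (ℕ → Tm)
  | 0, σ => σ
  | d + 1, σ => Tm.up (upI d σ)

/-- The substitution underlying `Fml.substTop`. -/
def sTop (u : Tm) : ℕ → Tm := fun n => match n with | 0 => u | n + 1 => Tm.var n

theorem upI_succ (d : ℕ) (σ : ℕ → Tm) : upI (d+1) σ = Tm.up (upI d σ) := rfl

theorem upI_lt {d i : ℕ} (σ : ℕ → Tm) (h : i < d) : upI d σ i = Tm.var i := by
  induction d generalizing i with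
  | zero => omega
  | succ d ih =>
    cases i with
    | zero => rfl
    | succ i =>
      show ((upI d σ) i).liftBy 0 1 = _
      rw [ih (by omega)]
      simp [Tm.liftBy]

theorem upI_ge {d i : ℕ} (σ : ℕ → Tm) (h : d ≤ i) : upI d σ i = (σ (i - d)).liftBy 0 d := by
  have hz : ∀ t : Tm, ∀ c, t.liftBy c 0 = t := by
    intro t; induction t with
    | var n => intro c; simp [Tm.liftBy]
    | zero => intro c; rfl
    | succ t iht => intro c; simp [Tm.liftBy, iht]
  induction d generalizing i with
  | zero => simp [upI, hz]
  | succ d ih =>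
    cases i with
    | zero => omega
    | succ i =>
      show ((upI d σ) i).liftBy 0 1 = _
      rw [ih (by omega)]
      have : ∀ t : Tm, (t.liftBy 0 d).liftBy 0 1 = t.liftBy 0 (d+1) := by
        intro t; induction t with
        | var n => simp [Tm.liftBy]; omega
        | zero => rfl
        | succ t iht => simp [Tm.liftBy, iht]
      simp [this]

theorem liftBy_liftBy (t : Tm) (d : ℕ) : (t.liftBy 0 d).liftBy 0 1 = t.liftBy 0 (d+1) := by
  induction t with
  | var n => simp [Tm.liftBy]; omega
  | zero => rfl
  | succ t iht => simp [Tm.liftBy, iht]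

theorem subst_subst (t : Tm) (σ τ : ℕ → Tm) :
    (t.subst σ).subst τ = t.subst (fun i => (σ i).subst τ) := by
  induction t with
  | var n => rfl
  | zero => rfl
  | succ t iht => simp [Tm.subst, iht]

theorem liftBy_eq_subst (t : Tm) (c k : ℕ) :
    t.liftBy c k = t.subst (fun i => if i < c then Tm.var i else Tm.var (i + k)) := by
  induction t with
  | var n => by_cases h : n < c <;> simp [Tm.liftBy, Tm.subst, h]
  | zero => rfl
  | succ t iht => simp [Tm.liftBy, Tm.subst, iht]

/-- Numerical evaluation of a term. -/
def tmval (φ : ℕ → ℕ) : Tm → ℕ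
  | .var n => φ n
  | .zero => 0
  | .succ t => tmval φ t + 1

theorem tmval_subst (φ : ℕ → ℕ) (σ : ℕ → Tm) (t : Tm) :
    tmval φ (t.subst σ) = tmval (fun i => tmval φ (σ i)) t := by
  induction t with
  | var n => rfl
  | zero => rfl
  | succ t iht => simp [Tm.subst, tmval, iht]

theorem tmval_liftBy (φ : ℕ → ℕ) (c k : ℕ) (t : Tm) :
    tmval φ (t.liftBy c k) = tmval (fun i => if i < c then φ i else φ (i + k)) t := by
  rw [liftBy_eq_subst, tmval_subst]
  congr 1; funext i; split <;> rfl

theorem tmval_snum (φ : ℕ → ℕ) (a : ℕ) : tmval φ (snum a) = a := by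
  induction a with
  | zero => rfl
  | succ a ih => simp [snum, tmval, ih]

theorem subst_snum (σ : ℕ → Tm) (a : ℕ) : (snum a).subst σ = snum a := by
  induction a with
  | zero => rfl
  | succ a ih => simp [snum, Tm.subst, ih]

section WithE
variable {E : Set (Tm × Tm)}

theorem eqcns_subst_stab {u v : Tm} (h : EqCns E u v) (σ : ℕ → Tm) :
    EqCns E (u.subst σ) (v.subst σ) := by
  induction h generalizing σ with
  | ax σ' hmem =>
    rw [subst_subst, subst_subst]
    exact EqCns.ax _ hmem
  | refl t => exact EqCns.refl _
  | symm _ ih => exact (ih σ).symm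
  | trans _ _ ih1 ih2 => exact (ih1 σ).trans (ih2 σ)
  | succ _ ih => exact (ih σ).succ

theorem eqcns_subst_congr {σ τ : ℕ → Tm} (h : ∀ i, EqCns E (σ i) (τ i)) (t : Tm) :
    EqCns E (t.subst σ) (t.subst τ) := by
  induction t with
  | var n => exact h n
  | zero => exact EqCns.refl _
  | succ t iht => exact iht.succ

/-- Ground substitution evaluates to a numeral. -/
theorem subst_ground (φ : ℕ → ℕ) (t : Tm) :
    t.subst (fun i => snum (φ i)) = snum (tmval φ t) := by
  induction t with
  | var n => rfl
  | zero => rfl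
  | succ t iht => simp [Tm.subst, iht]; rfl

theorem snum_inj (hE : Adequate E) {a b : ℕ} (h : EqCns E (snum a) (snum b)) : a = b := by
  induction a generalizing b with
  | zero =>
    cases b with
    | zero => rfl
    | succ b => exact absurd h.symm (hE.1 _)
  | succ a ih =>
    cases b with
    | zero => exact absurd h (hE.1 _)
    | succ b => exact congrArg Nat.succ (ih (hE.2 _ _ h))

/-- Soundness of equational consequence for numerical evaluation. -/
theorem eqcns_tmval_eq (hE : Adequate E) {u v : Tm} (h : EqCns E u v) (φ : ℕ → ℕ) :
    tmval φ u = tmval φ v := by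
  have := eqcns_subst_stab h (fun i => snum (φ i))
  rw [subst_ground, subst_ground] at this
  exact snum_inj hE this

end WithE

/-- Key arithmetic: an "admissible" substitution (a `substTop` pushed under `d` binders)
acts on a sufficiently lifted term as a mere unshift. -/
theorem liftBy_subst_adm (t : Tm) (c N d : ℕ) (u : Tm) (hc : c ≤ d) (hd : d < c + N) :
    (t.liftBy c N).subst (upI d (sTop u)) = t.liftBy c (N - 1) := by
  induction t with
  | var n =>
    simp only [Tm.liftBy]
    split
    · next h =>
      show upI d (sTop u) n = _
      rw [upI_lt _ (by omega)]
    · next h =>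
      show upI d (sTop u) (n + N) = _
      rw [upI_ge _ (by omega)]
      have h1 : n + N - d = (n + N - d - 1) + 1 := by omega
      rw [h1]
      show (Tm.var (n + N - d - 1)).liftBy 0 d = _
      simp [Tm.liftBy]
      omega
  | zero => rfl
  | succ t iht => simp [Tm.liftBy, Tm.subst] at *; exact iht


/-! ### Formula-level machinery -/

theorem eqcns_liftBy {E : Set (Tm × Tm)} {u v : Tm} (h : EqCns E u v) (c k : ℕ) :
    EqCns E (u.liftBy c k) (v.liftBy c k) := by
  rw [liftBy_eq_subst, liftBy_eq_subst]; exact eqcns_subst_stab h _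

/-- Equality of formulas up to `EqCns` on the arguments of atoms. -/
def FEq (E : Set (Tm × Tm)) : Fml → Fml → Prop
  | .pvar b X args, .pvar b' X' args' => b = b' ∧ X = X' ∧ List.Forall₂ (EqCns E) args args'
  | .arr A B, .arr A' B' => FEq E A A' ∧ FEq E B B'
  | .all1 A, .all1 A' => FEq E A A'
  | .all2 b X k A, .all2 b' X' k' A' => b = b' ∧ X = X' ∧ k = k' ∧ FEq E A A'
  | _, _ => False

section WithE2
variable {E : Set (Tm × Tm)}

theorem feq_refl (A : Fml) : FEq E A A := by
  induction A with
  | pvar b X args =>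
    refine ⟨rfl, rfl, ?_⟩
    induction args with
    | nil => exact List.Forall₂.nil
    | cons a as ih => exact List.Forall₂.cons (EqCns.refl a) ih
  | arr A B ihA ihB => exact ⟨ihA, ihB⟩
  | all1 A ih => exact ih
  | all2 b X k A ih => exact ⟨rfl, rfl, rfl, ih⟩

theorem feq_trans {A B C : Fml} (h1 : FEq E A B) (h2 : FEq E B C) : FEq E A C := by
  induction A generalizing B C with
  | pvar b X args =>
    cases B <;> try exact False.elim h1
    cases C <;> try exact False.elim h2
    obtain ⟨rfl, rfl, hf1⟩ := h1
    obtain ⟨rfl, rfl, hf2⟩ := h2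
    have htr : ∀ {as bs cs : List Tm}, List.Forall₂ (EqCns E) as bs →
        List.Forall₂ (EqCns E) bs cs → List.Forall₂ (EqCns E) as cs := by
      intro as bs cs h1 h2
      induction h1 generalizing cs with
      | nil => cases h2; exact .nil
      | cons h t ih => cases h2 with | cons h' t' => exact .cons (h.trans h') (ih t')
    exact ⟨rfl, rfl, htr hf1 hf2⟩
  | arr A B ihA ihB =>
    cases B <;> try exact False.elim h1
    cases C <;> try exact False.elim h2
    exact ⟨ihA h1.1 h2.1, ihB h1.2 h2.2⟩
  | all1 A ih =>
    cases B <;> try exact False.elim h1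
    cases C <;> try exact False.elim h2
    exact ih h1 h2
  | all2 b X k A ih =>
    cases B <;> try exact False.elim h1
    cases C <;> try exact False.elim h2
    obtain ⟨rfl, rfl, rfl, hf1⟩ := h1
    obtain ⟨rfl, rfl, rfl, hf2⟩ := h2
    exact ⟨rfl, rfl, rfl, ih hf1 hf2⟩

theorem feq_subst1_pt {σ τ : ℕ → Tm} (h : ∀ i, EqCns E (σ i) (τ i)) (A : Fml) :
    FEq E (A.subst1 σ) (A.subst1 τ) := by
  induction A generalizing σ τ with
  | pvar b X args =>
    refine ⟨rfl, rfl, ?_⟩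
    induction args with
    | nil => exact List.Forall₂.nil
    | cons a as ih => exact List.Forall₂.cons (eqcns_subst_congr h a) ih
  | arr A B ihA ihB => exact ⟨ihA h, ihB h⟩
  | all1 A ih =>
    refine ih (fun i => ?_)
    cases i with
    | zero => exact EqCns.refl _
    | succ i => exact eqcns_liftBy (h i) 0 1
  | all2 b X k A ih => exact ⟨rfl, rfl, rfl, ih h⟩

theorem feq_substTop {u v : Tm} (h : EqCns E u v) (A : Fml) :
    FEq E (A.substTop u) (A.substTop v) := by
  refine feq_subst1_pt (fun i => ?_) A
  cases i with
  | zero => exact h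
  | succ i => exact EqCns.refl _

theorem feq_arr_inv {P Q Z : Fml} (h : FEq E (.arr P Q) Z) :
    ∃ P' Q', Z = .arr P' Q' ∧ FEq E P P' ∧ FEq E Q Q' := by
  cases Z <;> try exact False.elim h
  exact ⟨_, _, rfl, h.1, h.2⟩

theorem feq_all1_inv {W Z : Fml} (h : FEq E (.all1 W) Z) :
    ∃ W', Z = .all1 W' ∧ FEq E W W' := by
  cases Z <;> try exact False.elim h
  exact ⟨_, rfl, h⟩

theorem feq_all2_inv {b : Bool} {X k : ℕ} {W Z : Fml} (h : FEq E (.all2 b X k W) Z) :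
    ∃ W', Z = .all2 b X k W' ∧ FEq E W W' := by
  cases Z <;> try exact False.elim h
  obtain ⟨rfl, rfl, rfl, h'⟩ := h
  exact ⟨_, rfl, h'⟩

theorem feq_pvar_inv {b : Bool} {X : ℕ} {args : List Tm} {Z : Fml}
    (h : FEq E (.pvar b X args) Z) :
    ∃ args', Z = .pvar b X args' ∧ List.Forall₂ (EqCns E) args args' := by
  cases Z <;> try exact False.elim h
  obtain ⟨rfl, rfl, h'⟩ := h
  exact ⟨_, rfl, h'⟩

end WithE2

/-- `fv2` is invariant under first-order operations. -/
theorem fv2_subst1 (A : Fml) (σ : ℕ → Tm) (b : Bool) (X : ℕ) :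
    (A.subst1 σ).fv2 b X ↔ A.fv2 b X := by
  induction A generalizing σ with
  | pvar b' X' args => simp [Fml.subst1, Fml.fv2]
  | arr A B ihA ihB => simp [Fml.subst1, Fml.fv2, ihA, ihB]
  | all1 A ih => simp [Fml.subst1, Fml.fv2, ih]
  | all2 b' X' k A ih => simp [Fml.subst1, Fml.fv2, ih]

theorem fv2_lift1By (A : Fml) (c k : ℕ) (b : Bool) (X : ℕ) :
    (A.lift1By c k).fv2 b X ↔ A.fv2 b X := by
  induction A generalizing c with
  | pvar b' X' args => simp [Fml.lift1By, Fml.fv2]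
  | arr A B ihA ihB => simp [Fml.lift1By, Fml.fv2, ihA, ihB]
  | all1 A ih => simp [Fml.lift1By, Fml.fv2, ih]
  | all2 b' X' k' A ih => simp [Fml.lift1By, Fml.fv2, ih]

/-- `psubst` is a no-op on a formula in which the predicate variable does not occur. -/
theorem psubst_noop {A : Fml} {b : Bool} {X : ℕ} (h : ¬ A.fv2 b X) (k : ℕ) (G : Fml) (d : ℕ) :
    Fml.psubst b X k G d A = A := by
  induction A generalizing d with
  | pvar b' X' args =>
    have : ¬ (b = b' ∧ X = X') := fun hc => h ⟨hc.1, hc.2⟩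
    simp [Fml.psubst, this]
  | arr A B ihA ihB =>
    have h' : ¬ A.fv2 b X ∧ ¬ B.fv2 b X := by
      constructor <;> intro hc <;> exact h (by simp [Fml.fv2]; tauto)
    simp [Fml.psubst, ihA h'.1, ihB h'.2]
  | all1 A ih =>
    have h' : ¬ A.fv2 b X := fun hc => h hc
    simp [Fml.psubst, ih h']
  | all2 b' X' k' A ih =>
    by_cases hc : b = b' ∧ X = X'
    · simp [Fml.psubst, hc]
    · have h' : ¬ A.fv2 b X := fun hf => h ⟨hc, hf⟩
      simp [Fml.psubst, hc, ih h']

/-- Iterated context lift. -/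
def liftF : ℕ → Fml → Fml
  | 0, A => A
  | j + 1, A => Fml.lift1By 0 1 (liftF j A)

def liftCtx (j : ℕ) (Γ : List Fml) : List Fml := Γ.map (liftF j)

theorem liftCtx_zero (Γ : List Fml) : liftCtx 0 Γ = Γ := by
  induction Γ with
  | nil => rfl
  | cons a Γ ih => show liftF 0 a :: liftCtx 0 Γ = a :: Γ; rw [ih]; rfl

theorem liftCtx_succ (j : ℕ) (Γ : List Fml) :
    (liftCtx j Γ).map (Fml.lift1By 0 1) = liftCtx (j+1) Γ := by
  simp only [liftCtx, List.map_map]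
  apply List.map_congr_left
  intro a _; rfl

theorem fv2_liftF (A : Fml) (j : ℕ) (b : Bool) (X : ℕ) :
    (liftF j A).fv2 b X ↔ A.fv2 b X := by
  induction j with
  | zero => rfl
  | succ j ih => simp [liftF, fv2_lift1By, ih]

/-- The free predicate variables of a context. -/
def fvC (Γ : List Fml) (b : Bool) (X : ℕ) : Prop := ∃ C ∈ Γ, C.fv2 b X

/-! ### The one-step relation on (level, formula) pairs and the generation lemma -/

inductive Stp (E : Set (Tm × Tm)) (F : Bool → ℕ → Prop) : ℕ × Fml → ℕ × Fml → Prop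
  | w1 {j A} : Stp E F (j+1, A) (j, .all1 A)
  | peel1 {j A} (u) : Stp E F (j, .all1 A) (j, A.substTop u)
  | w2 {j A} (b X k) (h : ¬ F b X) : Stp E F (j, A) (j, .all2 b X k A)
  | peel2 {j A b X k} (G) : Stp E F (j, .all2 b X k A) (j, Fml.psubst b X k G 0 A)
  | feq {j A B} (h : FEq E A B) : Stp E F (j, A) (j, B)

def Star (E : Set (Tm × Tm)) (F : Bool → ℕ → Prop) : ℕ × Fml → ℕ × Fml → Prop :=
  Relation.ReflTransGen (Stp E F)

/-- Conclusion of the generation lemma, by shape of the subject. -/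
def GenC (E : Set (Tm × Tm)) (Γ : List Fml) (j : ℕ) : Lam → Fml → Prop
  | .var i, B => ∃ l A0, Γ[i]? = some A0 ∧ Star E (fvC Γ) (l, liftF l A0) (j, B)
  | .app u v, B => ∃ l A B0, DerB E (liftCtx l Γ) u (.arr A B0) ∧ DerB E (liftCtx l Γ) v A ∧
      Star E (fvC Γ) (l, B0) (j, B)
  | .lam s, B => ∃ l A B0, DerB E (A :: liftCtx l Γ) s B0 ∧
      Star E (fvC Γ) (l, .arr A B0) (j, B)

theorem genC_step {E Γ j t B B'} (h : GenC E Γ j t B)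
    (hs : Stp E (fvC Γ) (j, B) (j', B')) : GenC E Γ j' t B' := by
  cases t with
  | var i =>
    obtain ⟨l, A0, h1, h2⟩ := h
    exact ⟨l, A0, h1, h2.tail hs⟩
  | app u v =>
    obtain ⟨l, A, B0, h1, h2, h3⟩ := h
    exact ⟨l, A, B0, h1, h2, h3.tail hs⟩
  | lam s =>
    obtain ⟨l, A, B0, h1, h2⟩ := h
    exact ⟨l, A, B0, h1, h2.tail hs⟩

/-- The generation lemma. -/
theorem gen {E : Set (Tm × Tm)} : ∀ {Γ' : List Fml} {t : Lam} {B : Fml},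
    DerB E Γ' t B → ∀ Γ j, Γ' = liftCtx j Γ → GenC E Γ j t B := by
  intro Γ' t B h
  induction h with
  | var Γ'' i A hget =>
    intro Γ j hΓ
    subst hΓ
    rw [liftCtx, List.getElem?_map] at hget
    cases hA0 : Γ[i]? with
    | none => rw [hA0] at hget; exact absurd hget (by simp)
    | some A0 =>
      rw [hA0] at hget
      simp at hget
      exact ⟨j, A0, hA0, hget ▸ Relation.ReflTransGen.refl⟩
  | lamI hprem ih =>
    intro Γ j hΓ
    exact ⟨j, _, _, hΓ ▸ hprem, Relation.ReflTransGen.refl⟩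
  | appE hprem1 hprem2 ih1 ih2 =>
    intro Γ j hΓ
    exact ⟨j, _, _, hΓ ▸ hprem1, hΓ ▸ hprem2, Relation.ReflTransGen.refl⟩
  | all1I hprem ih =>
    intro Γ j hΓ
    have := ih Γ (j+1) (by rw [hΓ, liftCtx_succ])
    exact genC_step this Stp.w1
  | all1E u hprem ih =>
    intro Γ j hΓ
    exact genC_step (ih Γ j hΓ) (Stp.peel1 u)
  | all2I b X k hprem hside ih =>
    intro Γ j hΓ
    refine genC_step (ih Γ j hΓ) (Stp.w2 b X k ?_)
    rintro ⟨C, hC, hfv⟩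
    exact hside (liftF j C) (hΓ ▸ List.mem_map_of_mem hC) ((fv2_liftF C j b X).2 hfv)
  | all2E G hprem hbot ih =>
    intro Γ j hΓ
    exact genC_step (ih Γ j hΓ) (Stp.peel2 G)
  | eqr hprem heq ih =>
    intro Γ j hΓ
    exact genC_step (ih Γ j hΓ) (Stp.feq (feq_substTop heq _))




/-! ### Wrap families: invariants preserved along `Star` -/

inductive GFam (F : Bool → ℕ → Prop) (P : ℕ → Fml → Prop) : ℕ → Fml → Prop
  | core {j B} : P j B → GFam F P j B
  | w1 {j B} : GFam F P (j+1) B → GFam F P j (.all1 B)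
  | w2 {j B} (b X k) (h : ¬ F b X) : GFam F P j B → GFam F P j (.all2 b X k B)

/-- Closure conditions on the core family. -/
structure Clos (E : Set (Tm × Tm)) (F : Bool → ℕ → Prop) (P : ℕ → Fml → Prop) : Prop where
  hSub : ∀ j d u B, d ≤ j → P (j+1) B → P j (B.subst1 (upI d (sTop u)))
  hPs : ∀ j B b X k G d, ¬ F b X → P j B → P j (Fml.psubst b X k G d B)
  hFeq : ∀ j B B', P j B → FEq E B B' → P j B'
  hPeel1 : ∀ j A u, P j (.all1 A) → P j (A.substTop u)
  hPeel2 : ∀ j A b X k G, P j (.all2 b X k A) → P j (Fml.psubst b X k G 0 A)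

section GFamLemmas
variable {E : Set (Tm × Tm)} {F : Bool → ℕ → Prop} {P : ℕ → Fml → Prop}

theorem gfam_descend (hC : Clos E F P) :
    ∀ {j B}, GFam F P j B → ∀ d u, d + 1 ≤ j → GFam F P (j-1) (B.subst1 (upI d (sTop u))) := by
  intro j B h
  induction h with
  | core hP =>
    intro d u hd
    rename_i j B
    obtain ⟨j', rfl⟩ : ∃ j', j = j' + 1 := ⟨j - 1, by omega⟩
    exact GFam.core (hC.hSub j' d u B (by omega) hP)
  | w1 hprem ih =>
    intro d u hd
    rename_i j B
    show GFam F P (j-1) (.all1 (B.subst1 (Tm.up (upI d (sTop u)))))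
    have h1 : Tm.up (upI d (sTop u)) = upI (d+1) (sTop u) := rfl
    rw [h1]
    have := ih (d+1) u (by omega)
    obtain ⟨j', rfl⟩ : ∃ j', j = j' + 1 := ⟨j - 1, by omega⟩
    exact GFam.w1 (by simpa using this)
  | w2 b X k hF hprem ih =>
    intro d u hd
    exact GFam.w2 b X k hF (ih d u hd)

theorem gfam_psub (hC : Clos E F P) :
    ∀ {j B}, GFam F P j B → ∀ b X k G d, ¬ F b X → GFam F P j (Fml.psubst b X k G d B) := by
  intro j B h
  induction h with
  | core hP => intro b X k G d hF; exact GFam.core (hC.hPs _ _ b X k G d hF hP)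
  | w1 hprem ih =>
    intro b X k G d hF
    show GFam F P _ (.all1 (Fml.psubst b X k G (d+1) _))
    exact GFam.w1 (ih b X k G (d+1) hF)
  | w2 b' X' k' hF' hprem ih =>
    intro b X k G d hF
    show GFam F P _ (Fml.psubst b X k G d (.all2 b' X' k' _))
    by_cases hc : b = b' ∧ X = X'
    · simp only [Fml.psubst, if_pos hc]
      exact GFam.w2 b' X' k' hF' hprem
    · simp only [Fml.psubst, if_neg hc]
      exact GFam.w2 b' X' k' hF' (ih b X k G d hF)

theorem gfam_feq (hC : Clos E F P) :
    ∀ {j B}, GFam F P j B → ∀ B', FEq E B B' → GFam F P j B' := by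
  intro j B h
  induction h with
  | core hP => intro B' hfe; exact GFam.core (hC.hFeq _ _ B' hP hfe)
  | w1 hprem ih =>
    intro B' hfe
    cases B' <;> try exact False.elim hfe
    exact GFam.w1 (ih _ hfe)
  | w2 b X k hF hprem ih =>
    intro B' hfe
    cases B' <;> try exact False.elim hfe
    obtain ⟨rfl, rfl, rfl, hfe'⟩ := hfe
    exact GFam.w2 b X k hF (ih _ hfe')

theorem gfam_step (hC : Clos E F P) {p q : ℕ × Fml} (hs : Stp E F p q)
    (h : GFam F P p.1 p.2) : GFam F P q.1 q.2 := by
  cases hs with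
  | w1 => exact GFam.w1 h
  | peel1 u =>
    cases h with
    | core hP => exact GFam.core (hC.hPeel1 _ _ u hP)
    | w1 hprem =>
      have := gfam_descend hC hprem 0 u (by omega)
      exact this
  | w2 b X k hF => exact GFam.w2 b X k hF h
  | peel2 G =>
    cases h with
    | core hP => exact GFam.core (hC.hPeel2 _ _ _ _ _ G hP)
    | w2 b' X' k' hF hprem => exact gfam_psub hC hprem _ _ _ G 0 hF
  | feq hfe => exact gfam_feq hC h _ hfe

theorem gfam_star (hC : Clos E F P) {p q : ℕ × Fml} (hs : Star E F p q)
    (h : GFam F P p.1 p.2) : GFam F P q.1 q.2 := by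
  induction hs with
  | refl => exact h
  | tail _ hstep ih => exact gfam_step hC hstep ih

theorem star_invariant (hC : Clos E F P) {l : ℕ} {A0 : Fml} {j : ℕ} {B : Fml}
    (hs : Star E F (l, A0) (j, B)) (h0 : P l A0) : GFam F P j B :=
  gfam_star hC hs (GFam.core h0)

end GFamLemmas


/-! ### Top-level analysis: the types of the context variable -/

/-- `N`-type with slack in the slots. -/
def NtyS (v0 w1 w2 v : Tm) : Fml :=
  .all2 false 0 1 (.arr (.pvar false 0 [v0])
    (.arr (.all1 (.arr (.pvar false 0 [w1]) (.pvar false 0 [w2]))) (.pvar false 0 [v])))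

def C0f (n : ℕ) : Fml := negF (Nty (snum n))

theorem C0f_eq (n : ℕ) : C0f n = .arr (NtyS .zero (.var 0) (.succ (.var 0)) (snum n)) botF := rfl

section TopAnalysis
variable {E : Set (Tm × Tm)}

/-- The invariant family for the types of `var 0 : ¬N[sⁿ0]`. -/
def Ptop (E : Set (Tm × Tm)) (n : ℕ) (_ : ℕ) (B : Fml) : Prop :=
  ∃ v0 w1 w2 v, B = .arr (NtyS v0 w1 w2 v) botF ∧
    EqCns E v0 .zero ∧ EqCns E w1 (.var 0) ∧ EqCns E w2 (.succ (.var 0)) ∧ EqCns E v (snum n)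

theorem NtyS_subst1 (v0 w1 w2 v : Tm) (σ : ℕ → Tm) :
    (NtyS v0 w1 w2 v).subst1 σ =
      NtyS (v0.subst σ) (w1.subst (Tm.up σ)) (w2.subst (Tm.up σ)) (v.subst σ) := rfl

theorem botF_subst1 (σ : ℕ → Tm) : botF.subst1 σ = botF := rfl

theorem up_var0 (σ : ℕ → Tm) : (Tm.var 0).subst (Tm.up σ) = Tm.var 0 := rfl

theorem ptop_subst {n j j' : ℕ} {B : Fml} (h : Ptop E n j B) (σ : ℕ → Tm) :
    Ptop E n j' (B.subst1 σ) := by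
  obtain ⟨v0, w1, w2, v, rfl, h0, h1, h2, h3⟩ := h
  refine ⟨v0.subst σ, w1.subst (Tm.up σ), w2.subst (Tm.up σ), v.subst σ, rfl, ?_, ?_, ?_, ?_⟩
  · exact eqcns_subst_stab h0 σ
  · exact eqcns_subst_stab h1 (Tm.up σ)
  · exact eqcns_subst_stab h2 (Tm.up σ)
  · have := eqcns_subst_stab h3 σ
    rwa [subst_snum] at this

theorem nofv_NtySarr (v0 w1 w2 v : Tm) (b : Bool) (X : ℕ) :
    ¬ (Fml.arr (NtyS v0 w1 w2 v) botF).fv2 b X := by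
  intro hfv
  simp only [NtyS, botF, Fml.fv2] at hfv
  tauto

theorem ptop_nofv {n j : ℕ} {B : Fml} (h : Ptop E n j B) (b : Bool) (X : ℕ) : ¬ B.fv2 b X := by
  obtain ⟨v0, w1, w2, v, rfl, -, -, -, -⟩ := h
  exact nofv_NtySarr v0 w1 w2 v b X

theorem clos_ptop (n : ℕ) (F : Bool → ℕ → Prop) : Clos E F (Ptop E n) where
  hSub := fun j d u B _ h => ptop_subst h _
  hPs := fun j B b X k G d _ h => by rw [psubst_noop (ptop_nofv h b X)]; exact h
  hFeq := by
    intro j B B' h hfe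
    obtain ⟨v0, w1, w2, v, rfl, h0, h1, h2, h3⟩ := h
    cases B' <;> try exact False.elim hfe
    next N' Q' =>
    obtain ⟨hfN, hfQ⟩ := hfe
    cases N' <;> try exact False.elim hfN
    next b' X' k' M' =>
    obtain ⟨hb, hX, hk, hfM⟩ := hfN
    cases M' <;> try exact False.elim hfM
    next D1' R' =>
    obtain ⟨hfD1, hfR⟩ := hfM
    cases D1' <;> try exact False.elim hfD1
    next bd Xd argsd =>
    obtain ⟨hbd, hXd, hfad⟩ := hfD1
    cases hfad with
    | cons h0' hnil =>
      cases hnil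
      cases R' <;> try exact False.elim hfR
      next S' V' =>
      obtain ⟨hfS, hfV⟩ := hfR
      cases S' <;> try exact False.elim hfS
      next S1' =>
      cases S1' <;> try exact False.elim hfS
      next Sa' Sb' =>
      obtain ⟨hfSa, hfSb⟩ := hfS
      cases Sa' <;> try exact False.elim hfSa
      next ba Xa argsa =>
      obtain ⟨hba, hXa, hfaa⟩ := hfSa
      cases hfaa with
      | cons h1' hnil1 =>
        cases hnil1
        cases Sb' <;> try exact False.elim hfSb
        next bb Xb argsb =>
        obtain ⟨hbb, hXb, hfab⟩ := hfSb
        cases hfab with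
        | cons h2' hnil2 =>
          cases hnil2
          cases V' <;> try exact False.elim hfV
          next bv Xv argsv =>
          obtain ⟨hbv, hXv, hfav⟩ := hfV
          cases hfav with
          | cons h3' hnil3 =>
            cases hnil3
            cases Q' <;> try exact False.elim hfQ
            next bq Xq kq Q1' =>
            obtain ⟨hbq, hXq, hkq, hfQ1⟩ := hfQ
            cases Q1' <;> try exact False.elim hfQ1
            next bq1 Xq1 argsq1 =>
            obtain ⟨hbq1, hXq1, hfaq1⟩ := hfQ1
            cases hfaq1
            subst hb; subst hX; subst hk; subst hbd; subst hXd
            subst hba; subst hXa; subst hbb; subst hXb; subst hbv; subst hXv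
            subst hbq; subst hXq; subst hkq; subst hbq1; subst hXq1
            exact ⟨_, _, _, _, rfl, h0'.symm.trans h0, h1'.symm.trans h1,
              h2'.symm.trans h2, h3'.symm.trans h3⟩
  hPeel1 := by
    intro j A u h
    exfalso
    obtain ⟨v0, w1, w2, v, heq, -⟩ := h
    exact Fml.noConfusion heq
  hPeel2 := by
    intro j A b X k G h
    exfalso
    obtain ⟨v0, w1, w2, v, heq, -⟩ := h
    exact Fml.noConfusion heq

theorem liftBy_snum (c k a : ℕ) : (snum a).liftBy c k = snum a := by
  induction a with
  | zero => rfl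
  | succ a ih => simp [snum, Tm.liftBy, ih]

theorem liftF_C0 (n : ℕ) (j : ℕ) : liftF j (C0f n) = C0f n := by
  induction j with
  | zero => rfl
  | succ j ih =>
    show Fml.lift1By 0 1 (liftF j (C0f n)) = C0f n
    rw [ih]
    show Fml.lift1By 0 1 (.arr (NtyS .zero (.var 0) (.succ (.var 0)) (snum n)) botF) = _
    simp only [Fml.lift1By, NtyS, C0f_eq, List.map, Tm.liftBy, botF, liftBy_snum]
    rfl

theorem liftCtx_C0 (n : ℕ) (l : ℕ) : liftCtx l [C0f n] = [C0f n] := by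
  simp [liftCtx, liftF_C0]

theorem fvC_C0 (n : ℕ) (b : Bool) (X : ℕ) : ¬ fvC [C0f n] b X := by
  rintro ⟨C, hC, hfv⟩
  simp at hC
  subst hC
  rw [C0f_eq] at hfv
  exact nofv_NtySarr _ _ _ _ b X hfv

/-- Generation for `var 0` in context `[¬N[sⁿ0]]`: every derivable type is in the family. -/
theorem var0_type {n : ℕ} {T : Fml} (h : DerB E [C0f n] (.var 0) T) :
    GFam (fvC [C0f n]) (Ptop E n) 0 T := by
  have := gen h [C0f n] 0 (liftCtx_zero _).symm
  obtain ⟨l, A0, hget, hstar⟩ := this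
  simp at hget
  subst hget
  rw [liftF_C0] at hstar
  refine star_invariant (clos_ptop n (fvC [C0f n])) hstar ?_
  rw [C0f_eq]
  exact ⟨_, _, _, _, rfl, EqCns.refl _, EqCns.refl _, EqCns.refl _, EqCns.refl _⟩

/-- Main top-level extraction: the argument `church m` receives an `N`-type with slack. -/
theorem top_extract {n m : ℕ}
    (h : DerB E [C0f n] (.app (.var 0) (church m)) botF) :
    ∃ v0 w1 w2 v, DerB E [C0f n] (church m) (NtyS v0 w1 w2 v) ∧
      EqCns E v0 .zero ∧ EqCns E w1 (.var 0) ∧ EqCns E w2 (.succ (.var 0)) ∧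
      EqCns E v (snum n) := by
  have := gen h [C0f n] 0 (liftCtx_zero _).symm
  obtain ⟨l, A, B0, h1, h2, -⟩ := this
  rw [liftCtx_C0] at h1 h2
  have hg := var0_type h1
  cases hg with
  | core hP =>
    obtain ⟨v0, w1, w2, v, heq, h0, hw1, hw2, hv⟩ := hP
    cases heq
    exact ⟨v0, w1, w2, v, h2, h0, hw1, hw2, hv⟩

end TopAnalysis


/-! ### Pair flows: componentwise analysis of chains out of an `arr` core -/

section Flows
variable {E : Set (Tm × Tm)} {F : Bool → ℕ → Prop}

/-- One step of a correlated pair flow (the two components receive the same operation). -/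
inductive PairS (E : Set (Tm × Tm)) (F : Bool → ℕ → Prop) :
    (ℕ × Fml × Fml) → (ℕ × Fml × Fml) → Prop
  | sub {j : ℕ} (d : ℕ) (u : Tm) (hd : d ≤ j) (X Y : Fml) :
      PairS E F (j+1, X, Y) (j, X.subst1 (upI d (sTop u)), Y.subst1 (upI d (sTop u)))
  | ps {j : ℕ} {X Y : Fml} (b : Bool) (Z k : ℕ) (G : Fml) (d : ℕ) (h : ¬ F b Z) :
      PairS E F (j, X, Y) (j, Fml.psubst b Z k G d X, Fml.psubst b Z k G d Y)
  | feq {j : ℕ} {X Y X' Y' : Fml} (h1 : FEq E X X') (h2 : FEq E Y Y') :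
      PairS E F (j, X, Y) (j, X', Y')

def PairFlow (E : Set (Tm × Tm)) (F : Bool → ℕ → Prop) :
    (ℕ × Fml × Fml) → (ℕ × Fml × Fml) → Prop := Relation.ReflTransGen (PairS E F)

def Ppair (E : Set (Tm × Tm)) (F : Bool → ℕ → Prop) (l : ℕ) (X0 Y0 : Fml)
    (j : ℕ) (B : Fml) : Prop :=
  ∃ X Y, B = .arr X Y ∧ PairFlow E F (l, X0, Y0) (j, X, Y)

theorem clos_ppair (l : ℕ) (X0 Y0 : Fml) : Clos E F (Ppair E F l X0 Y0) where
  hSub := by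
    rintro j d u B hd ⟨X, Y, rfl, hf⟩
    exact ⟨_, _, rfl, hf.tail (PairS.sub d u hd X Y)⟩
  hPs := by
    rintro j B b Z k G d hF ⟨X, Y, rfl, hf⟩
    exact ⟨_, _, rfl, hf.tail (PairS.ps b Z k G d hF)⟩
  hFeq := by
    rintro j B B' ⟨X, Y, rfl, hf⟩ hfe
    cases B' <;> try exact False.elim hfe
    exact ⟨_, _, rfl, hf.tail (PairS.feq hfe.1 hfe.2)⟩
  hPeel1 := by rintro j A u ⟨X, Y, heq, -⟩; exact absurd heq (by simp)
  hPeel2 := by rintro j A b X k G ⟨X', Y', heq, -⟩; exact absurd heq (by simp)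

/-- Decomposition of a `Star` chain out of an `arr`. -/
theorem pair_decomp {l : ℕ} {X0 Y0 : Fml} {j : ℕ} {B : Fml}
    (hs : Star E F (l, .arr X0 Y0) (j, B)) :
    GFam F (Ppair E F l X0 Y0) j B :=
  star_invariant (clos_ppair l X0 Y0) hs ⟨X0, Y0, rfl, Relation.ReflTransGen.refl⟩

/-- Crude (uncorrelated, unleveled) component flow; enough for root chasing. -/
def CStp (E : Set (Tm × Tm)) (F : Bool → ℕ → Prop) (X X' : Fml) : Prop :=
  (∃ σ, X' = X.subst1 σ) ∨
  (∃ b Z k G d, ¬ F b Z ∧ X' = Fml.psubst b Z k G d X) ∨ FEq E X X'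

def CFlow (E : Set (Tm × Tm)) (F : Bool → ℕ → Prop) : Fml → Fml → Prop :=
  Relation.ReflTransGen (CStp E F)

theorem pairflow_left {p q : ℕ × Fml × Fml} (h : PairFlow E F p q) :
    CFlow E F p.2.1 q.2.1 := by
  induction h with
  | refl => exact Relation.ReflTransGen.refl
  | tail _ hstep ih =>
    refine ih.tail ?_
    cases hstep with
    | sub d u hd X Y => exact Or.inl ⟨_, rfl⟩
    | ps b Z k G d hF => exact Or.inr (Or.inl ⟨b, Z, k, G, d, hF, rfl⟩)
    | feq h1 h2 => exact Or.inr (Or.inr h1)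

theorem pairflow_right {p q : ℕ × Fml × Fml} (h : PairFlow E F p q) :
    CFlow E F p.2.2 q.2.2 := by
  induction h with
  | refl => exact Relation.ReflTransGen.refl
  | tail _ hstep ih =>
    refine ih.tail ?_
    cases hstep with
    | sub d u hd X Y => exact Or.inl ⟨_, rfl⟩
    | ps b Z k G d hF => exact Or.inr (Or.inl ⟨b, Z, k, G, d, hF, rfl⟩)
    | feq h1 h2 => exact Or.inr (Or.inr h2)

/-- Crude flow out of an `arr` decomposes. -/
theorem cflow_arr {P Q Z : Fml} (h : CFlow E F (.arr P Q) Z) :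
    ∃ P' Q', Z = .arr P' Q' ∧ CFlow E F P P' ∧ CFlow E F Q Q' := by
  induction h with
  | refl => exact ⟨P, Q, rfl, Relation.ReflTransGen.refl, Relation.ReflTransGen.refl⟩
  | tail _ hstep ih =>
    obtain ⟨P', Q', rfl, h1, h2⟩ := ih
    rcases hstep with ⟨σ, rfl⟩ | ⟨b, Z', k, G, d, hF, rfl⟩ | hfe
    · exact ⟨_, _, rfl, h1.tail (Or.inl ⟨σ, rfl⟩), h2.tail (Or.inl ⟨σ, rfl⟩)⟩
    · exact ⟨_, _, rfl, h1.tail (Or.inr (Or.inl ⟨b, Z', k, G, d, hF, rfl⟩)),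
        h2.tail (Or.inr (Or.inl ⟨b, Z', k, G, d, hF, rfl⟩))⟩
    · obtain ⟨P'', Q'', rfl, hf1, hf2⟩ := feq_arr_inv hfe
      exact ⟨_, _, rfl, h1.tail (Or.inr (Or.inr hf1)), h2.tail (Or.inr (Or.inr hf2))⟩

/-- Crude flow out of an `all1` decomposes. -/
theorem cflow_all1 {W Z : Fml} (h : CFlow E F (.all1 W) Z) :
    ∃ W', Z = .all1 W' ∧ CFlow E F W W' := by
  induction h with
  | refl => exact ⟨W, rfl, Relation.ReflTransGen.refl⟩
  | tail _ hstep ih =>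
    obtain ⟨W', rfl, h1⟩ := ih
    rcases hstep with ⟨σ, rfl⟩ | ⟨b, Z', k, G, d, hF, rfl⟩ | hfe
    · exact ⟨_, rfl, h1.tail (Or.inl ⟨_, rfl⟩)⟩
    · exact ⟨_, rfl, h1.tail (Or.inr (Or.inl ⟨b, Z', k, G, d+1, hF, rfl⟩))⟩
    · obtain ⟨W'', rfl, hf⟩ := feq_all1_inv hfe
      exact ⟨_, rfl, h1.tail (Or.inr (Or.inr hf))⟩

theorem cflow_all2 {b0 : Bool} {X0 k0 : ℕ} {W Z : Fml} (h : CFlow E F (.all2 b0 X0 k0 W) Z) :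
    ∃ W', Z = .all2 b0 X0 k0 W' := by
  induction h with
  | refl => exact ⟨W, rfl⟩
  | tail _ hstep ih =>
    obtain ⟨W', rfl⟩ := ih
    rcases hstep with ⟨σ, rfl⟩ | ⟨b, Z', k, G, d, hF, rfl⟩ | hfe
    · exact ⟨_, rfl⟩
    · by_cases hc : b = b0 ∧ Z' = X0
      · exact ⟨W', by simp [Fml.psubst, hc]⟩
      · refine ⟨Fml.psubst b Z' k G d W', ?_⟩
        simp [Fml.psubst, hc]
    · obtain ⟨W'', rfl, -⟩ := feq_all2_inv hfe
      exact ⟨_, rfl⟩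

/-- Crude flow out of a protected atom keeps name and root. -/
theorem cflow_pvar_protected {b0 : Bool} {X0 : ℕ} {args : List Tm} {Z : Fml}
    (h : CFlow E F (.pvar b0 X0 args) Z) (hprot : F b0 X0) :
    ∃ args', Z = .pvar b0 X0 args' := by
  induction h with
  | refl => exact ⟨args, rfl⟩
  | tail _ hstep ih =>
    obtain ⟨args', rfl⟩ := ih
    rcases hstep with ⟨σ, rfl⟩ | ⟨b, Z', k, G, d, hF, rfl⟩ | hfe
    · exact ⟨_, rfl⟩
    · have hc : ¬ (b = b0 ∧ Z' = X0) := by rintro ⟨rfl, rfl⟩; exact hF hprot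
      exact ⟨args', by simp [Fml.psubst, hc]⟩
    · obtain ⟨args'', rfl, -⟩ := feq_pvar_inv hfe
      exact ⟨_, rfl⟩

end Flows


/-! ### Graded numeric semantics of atoms -/

/-- Numeric valuation extended with a value for the bound variable. -/
def kcons (kk : ℕ) (φ : ℕ → ℕ) : ℕ → ℕ := fun i => match i with | 0 => kk | i+1 => φ i

/-- Truth of an atom under a graded interpretation. -/
def IA (I : Bool → ℕ → List ℕ → ℕ → Prop) (φ : ℕ → ℕ) (b : Bool) (X : ℕ)
    (args : List Tm) (g : ℕ) : Prop :=
  I b X (args.map (tmval φ)) g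

/-- The substitution used by `instArgs`. -/
def σkA (k : ℕ) (args : List Tm) : ℕ → Tm :=
  fun n => if n < k then args.getD n Tm.zero else Tm.var (n - k)

theorem psubst_pvar_hit (b : Bool) (X k : ℕ) (G : Fml) (d : ℕ) (args : List Tm) :
    Fml.psubst b X k G d (.pvar b X args) = (G.lift1By k d).subst1 (σkA k args) := by
  show (if b = b ∧ X = X then Fml.instArgs k (G.lift1By k d) args else .pvar b X args) = _
  rw [if_pos ⟨rfl, rfl⟩]
  rfl

theorem psubst_pvar_miss {b b' : Bool} {X X' : ℕ} (h : ¬ (b = b' ∧ X = X')) (k : ℕ) (G : Fml)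
    (d : ℕ) (args : List Tm) :
    Fml.psubst b X k G d (.pvar b' X' args) = .pvar b' X' args := by
  simp [Fml.psubst, h]

theorem subst1_pvar (σ : ℕ → Tm) (b : Bool) (X : ℕ) (args : List Tm) :
    Fml.subst1 σ (.pvar b X args) = .pvar b X (args.map (Tm.subst σ)) := rfl

/-- Updated interpretation. -/
def updI (I : Bool → ℕ → List ℕ → ℕ → Prop) (b : Bool) (X : ℕ) (P : List ℕ → ℕ → Prop) :
    Bool → ℕ → List ℕ → ℕ → Prop :=
  fun b' X' ds g => if b' = b ∧ X' = X then P ds g else I b' X' ds g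

/-- Semantic value of an atomic `G = pvar bg Xg gargs` with `k` slots, at offset `d`. -/
def Gsem (I : Bool → ℕ → List ℕ → ℕ → Prop) (φ : ℕ → ℕ) (k : ℕ) (bg : Bool) (Xg : ℕ)
    (gargs : List Tm) (d : ℕ) : List ℕ → ℕ → Prop :=
  fun ds g => I bg Xg (gargs.map (tmval (fun i => if i < k then ds.getD i 0 else φ (i - k + d)))) g

theorem getD_map_tmval (φv : ℕ → ℕ) (args : List Tm) (i : ℕ) :
    (args.map (tmval φv)).getD i 0 = tmval φv (args.getD i Tm.zero) := by
  induction args generalizing i with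
  | nil => simp [tmval]
  | cons a as ih =>
    cases i with
    | zero => simp
    | succ i => simpa using ih i

theorem tmval_inst {φv φ : ℕ → ℕ} {dep : ℕ} (hφ : ∀ i, φv (i + dep) = φ i)
    (k d : ℕ) (args : List Tm) (t : Tm) :
    tmval φv ((t.liftBy k (d + dep)).subst (σkA k args)) =
      tmval (fun i => if i < k then tmval φv (args.getD i Tm.zero) else φ (i - k + d)) t := by
  induction t with
  | var nn =>
    by_cases h : nn < k
    · simp [Tm.liftBy, h, Tm.subst, σkA, tmval]
    · have h1 : ¬ (nn + (d + dep) < k) := by omega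
      simp only [Tm.liftBy, if_neg h, Tm.subst, σkA, if_neg h1, tmval, if_neg h]
      have h2 : nn + (d + dep) - k = (nn - k + d) + dep := by omega
      rw [h2, hφ]
  | zero => rfl
  | succ t iht => simp [Tm.liftBy, Tm.subst, tmval, iht]

theorem gsem_eval (I : Bool → ℕ → List ℕ → ℕ → Prop) {φv φ : ℕ → ℕ} {dep : ℕ}
    (hφ : ∀ i, φv (i + dep) = φ i) (k d : ℕ) (bg : Bool) (Xg : ℕ) (gargs : List Tm)
    (args : List Tm) (g : ℕ) :
    Gsem I φ k bg Xg gargs d (args.map (tmval φv)) g ↔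
      IA I φv bg Xg (gargs.map (fun t => (t.liftBy k (d + dep)).subst (σkA k args))) g := by
  unfold Gsem IA
  rw [List.map_map]
  have h1 : (fun i => if i < k then (args.map (tmval φv)).getD i 0 else φ (i - k + d)) =
      (fun i => if i < k then tmval φv (args.getD i Tm.zero) else φ (i - k + d)) := by
    funext i; rw [getD_map_tmval]
  have h2 : List.map (tmval φv ∘ fun t => (t.liftBy k (d + dep)).subst (σkA k args)) gargs =
      List.map (tmval (fun i => if i < k then tmval φv (args.getD i Tm.zero) else φ (i - k + d)))
        gargs := by
    apply List.map_congr_left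
    intro t _
    simp only [Function.comp_apply]
    exact tmval_inst hφ k d args t
  rw [h1, h2]

/-- `IA` after a simultaneous first-order substitution is `IA` at a recomposed valuation. -/
theorem IA_subst (I : Bool → ℕ → List ℕ → ℕ → Prop) (φ : ℕ → ℕ) (ρ : ℕ → Tm) (b : Bool)
    (X : ℕ) (args : List Tm) (g : ℕ) :
    IA I φ b X (args.map (Tm.subst ρ)) g ↔ IA I (fun i => tmval φ (ρ i)) b X args g := by
  unfold IA
  rw [List.map_map]
  have h2 : List.map (tmval φ ∘ Tm.subst ρ) args =
      List.map (tmval (fun i => tmval φ (ρ i))) args := by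
    apply List.map_congr_left
    intro t _
    simp only [Function.comp_apply]
    rw [tmval_subst]
  rw [h2]

theorem tmval_liftBy0 (φ : ℕ → ℕ) (kk : ℕ) (t : Tm) :
    tmval (kcons kk φ) (t.liftBy 0 1) = tmval φ t := by
  rw [tmval_liftBy]
  congr 1

theorem kcons_up (φ : ℕ → ℕ) (ρ : ℕ → Tm) (kk : ℕ) (i : ℕ) :
    tmval (kcons kk φ) (Tm.up ρ i) = kcons kk (fun j => tmval φ (ρ j)) i := by
  cases i with
  | zero => rfl
  | succ i =>
    show tmval (kcons kk φ) ((ρ i).liftBy 0 1) = tmval φ (ρ i)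
    exact tmval_liftBy0 φ kk (ρ i)

/-- `IA` under an argument substitution pushed below the binder. -/
theorem IA_subst_up (I : Bool → ℕ → List ℕ → ℕ → Prop) (φ : ℕ → ℕ) (ρ : ℕ → Tm) (kk : ℕ)
    (b : Bool) (X : ℕ) (args : List Tm) (g : ℕ) :
    IA I (kcons kk φ) b X (args.map (Tm.subst (Tm.up ρ))) g ↔
      IA I (kcons kk (fun j => tmval φ (ρ j))) b X args g := by
  rw [IA_subst]
  unfold IA
  have h2 : (fun i => tmval (kcons kk φ) (Tm.up ρ i)) = kcons kk (fun j => tmval φ (ρ j)) := by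
    funext i; rw [kcons_up]
  rw [h2]

theorem IA_feq {E : Set (Tm × Tm)} (hE : Adequate E) (I : Bool → ℕ → List ℕ → ℕ → Prop)
    (φ : ℕ → ℕ) (b : Bool) (X : ℕ) {args args' : List Tm}
    (hf : List.Forall₂ (EqCns E) args args') (g : ℕ) :
    IA I φ b X args g ↔ IA I φ b X args' g := by
  unfold IA
  have : args.map (tmval φ) = args'.map (tmval φ) := by
    induction hf with
    | nil => rfl
    | cons h t ih => simp [ih, eqcns_tmval_eq hE h φ]
  rw [this]


/-! ### Further transfer lemmas -/

theorem liftBy_zero (t : Tm) (c : ℕ) : t.liftBy c 0 = t := by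
  induction t with
  | var n => simp [Tm.liftBy]
  | zero => rfl
  | succ t iht => simp [Tm.liftBy, iht]

theorem liftBy_add (t : Tm) (c a b : ℕ) : (t.liftBy c a).liftBy c b = t.liftBy c (a + b) := by
  induction t with
  | var n =>
    by_cases h : n < c
    · simp [Tm.liftBy, h]
    · have h2 : ¬ (n + a < c) := by omega
      simp [Tm.liftBy, h, h2]; omega
  | zero => rfl
  | succ t iht => simp [Tm.liftBy, iht]

/-- The substitution instantiating an `all1`-bound slot at level `L`. -/
def iSub (L : ℕ) (u : Tm) : ℕ → Tm := fun i => match i with | 0 => u | i+1 => Tm.var (i + L)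

theorem liftBy1_sTop (t : Tm) (L : ℕ) (u : Tm) :
    (t.liftBy 1 L).subst (sTop u) = t.subst (iSub L u) := by
  induction t with
  | var n =>
    cases n with
    | zero => rfl
    | succ n =>
      show sTop u (n + 1 + L) = iSub L u (n+1)
      have h1 : n + 1 + L = (n + L) + 1 := by omega
      rw [h1]
      rfl
  | zero => rfl
  | succ t iht => simp [Tm.liftBy, Tm.subst, iht]

theorem iSub_comp (L : ℕ) (u : Tm) (d : ℕ) (u' : Tm) (hd : d ≤ L) (i : ℕ) :
    (iSub (L+1) u i).subst (upI d (sTop u')) = iSub L (u.subst (upI d (sTop u'))) i := by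
  cases i with
  | zero => rfl
  | succ i =>
    show (Tm.var (i + (L+1))).subst (upI d (sTop u')) = Tm.var (i + L)
    show upI d (sTop u') (i + (L+1)) = Tm.var (i + L)
    rw [upI_ge _ (by omega)]
    have h1 : i + (L+1) - d = (i + L - d) + 1 := by omega
    rw [h1]
    show (Tm.var (i + L - d)).liftBy 0 d = _
    simp [Tm.liftBy]
    omega

section TransferLemmas
variable (I : Bool → ℕ → List ℕ → ℕ → Prop) (φ : ℕ → ℕ)

theorem IA_adm (N d : ℕ) (u : Tm) (hd : d < N) (b : Bool) (X : ℕ) (args : List Tm) (g : ℕ) :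
    IA I (fun i => tmval φ (upI d (sTop u) i)) b X (args.map (Tm.liftBy 0 N)) g ↔
      IA I φ b X (args.map (Tm.liftBy 0 (N-1))) g := by
  rw [← IA_subst]
  rw [List.map_map]
  have h2 : List.map (Tm.subst (upI d (sTop u)) ∘ Tm.liftBy 0 N) args =
      List.map (Tm.liftBy 0 (N-1)) args := by
    apply List.map_congr_left
    intro t _
    exact liftBy_subst_adm t 0 N d u (by omega) (by omega)
  rw [h2]

theorem IA_adm1 (N d : ℕ) (u : Tm) (kk : ℕ) (hd : d < N) (b : Bool) (X : ℕ) (args : List Tm)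
    (g : ℕ) :
    IA I (kcons kk (fun i => tmval φ (upI d (sTop u) i))) b X (args.map (Tm.liftBy 1 N)) g ↔
      IA I (kcons kk φ) b X (args.map (Tm.liftBy 1 (N-1))) g := by
  rw [← IA_subst_up]
  rw [List.map_map]
  have h2 : List.map (Tm.subst (Tm.up (upI d (sTop u))) ∘ Tm.liftBy 1 N) args =
      List.map (Tm.liftBy 1 (N-1)) args := by
    apply List.map_congr_left
    intro t _
    simp only [Function.comp_apply]
    have : Tm.up (upI d (sTop u)) = upI (d+1) (sTop u) := rfl
    rw [this]
    exact liftBy_subst_adm t 1 N (d+1) u (by omega) (by omega)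
  rw [h2]

theorem IA_lift1_eval (kk L : ℕ) (b : Bool) (X : ℕ) (args : List Tm) (g : ℕ) :
    IA I (kcons kk φ) b X (args.map (Tm.liftBy 1 L)) g ↔
      IA I (kcons kk (fun i => φ (i + L))) b X args g := by
  unfold IA
  rw [List.map_map]
  have h2 : List.map (tmval (kcons kk φ) ∘ Tm.liftBy 1 L) args =
      List.map (tmval (kcons kk (fun i => φ (i + L)))) args := by
    apply List.map_congr_left
    intro t _
    simp only [Function.comp_apply]
    rw [tmval_liftBy]
    congr 1
    funext i
    cases i with
    | zero => rfl
    | succ i =>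
      show kcons kk φ (i + 1 + L) = φ (i + L)
      have h1 : i + 1 + L = (i + L) + 1 := by omega
      rw [h1]
      rfl
  rw [h2]

theorem IA_iSub_eval (L : ℕ) (u : Tm) (b : Bool) (X : ℕ) (args : List Tm) (g : ℕ) :
    IA I φ b X (args.map (Tm.subst (iSub L u))) g ↔
      IA I (kcons (tmval φ u) (fun i => φ (i + L))) b X args g := by
  rw [IA_subst]
  have h2 : (fun i => tmval φ (iSub L u i)) = kcons (tmval φ u) (fun i => φ (i + L)) := by
    funext i
    cases i with
    | zero => rfl
    | succ i => rfl
  rw [h2]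

end TransferLemmas

/-! ### The inner analysis -/

section Inner
variable {E : Set (Tm × Tm)} (hE : Adequate E)
variable (ba : Bool) (Xa : ℕ) (argsA : List Tm)
variable (zcb : Bool) (zc : ℕ) (cargs : List Tm)
variable (zdb : Bool) (zd : ℕ) (dargs : List Tm)
variable (n l2 : ℕ)

/-- The inner context. -/
def A1f : Fml := .pvar ba Xa argsA
def A2f : Fml := .all1 (.arr (.pvar zcb zc cargs) (.pvar zdb zd dargs))
def Dctx : List Fml := A2f zcb zc cargs zdb zd dargs :: liftCtx l2 [A1f ba Xa argsA, C0f n]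

/-- The (fixed-)hypotheses of the inner semantic claims, at core level `jc`. -/
def SDe (I : Bool → ℕ → List ℕ → ℕ → Prop) (φ : ℕ → ℕ) (jc : ℕ) : Prop :=
  ∀ kk g, IA I (kcons kk φ) zcb zc (cargs.map (Tm.liftBy 1 jc)) g →
    IA I (kcons kk φ) zdb zd (dargs.map (Tm.liftBy 1 jc)) (g+1)

def HypD (I : Bool → ℕ → List ℕ → ℕ → Prop) (φ : ℕ → ℕ) (jc : ℕ) : Prop :=
  IA I φ ba Xa (argsA.map (Tm.liftBy 0 (jc + l2))) 0 ∧ SDe zcb zc cargs zdb zd dargs I φ jc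

/-- The claim-carrying core family for `churchBody`-typings, at grade `g0`. -/
def Pclaim (g0 : ℕ) (jc : ℕ) (B : Fml) : Prop :=
  ∃ b' X' args', B = .pvar b' X' args' ∧
    fvC (Dctx ba Xa argsA zcb zc cargs zdb zd dargs n l2) b' X' ∧
    ∀ I φ, HypD ba Xa argsA zcb zc cargs zdb zd dargs l2 I φ jc → IA I φ b' X' args' g0

set_option maxHeartbeats 1000000 in
theorem hypD_adm {I φ jc d} (u : Tm) (hd : d ≤ jc)
    (h : HypD ba Xa argsA zcb zc cargs zdb zd dargs l2 I φ jc) :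
    HypD ba Xa argsA zcb zc cargs zdb zd dargs l2 I
      (fun i => tmval φ (upI d (sTop u) i)) (jc + 1) := by
  obtain ⟨hx, hs⟩ := h
  constructor
  · have := (IA_adm I φ (jc + 1 + l2) d u (by omega) ba Xa argsA 0).2
    have h2 : jc + 1 + l2 - 1 = jc + l2 := by omega
    rw [h2] at this
    exact this hx
  · intro kk g hyp
    have h1 := (IA_adm1 I φ (jc+1) d u kk (by omega) zcb zc cargs g).1 hyp
    have h2 : jc + 1 - 1 = jc := by omega
    rw [h2] at h1
    have h3 := hs kk g h1
    have h4 := (IA_adm1 I φ (jc+1) d u kk (by omega) zdb zd dargs (g+1)).2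
    rw [h2] at h4
    exact h4 h3

theorem clos_pclaim (hE' : Adequate E) (g0 : ℕ) :
    Clos E (fvC (Dctx ba Xa argsA zcb zc cargs zdb zd dargs n l2))
      (Pclaim ba Xa argsA zcb zc cargs zdb zd dargs n l2 g0) where
  hSub := by
    rintro j d u B hd ⟨b', X', args', rfl, hprot, hcl⟩
    refine ⟨b', X', args'.map (Tm.subst (upI d (sTop u))), rfl, hprot, ?_⟩
    intro I φ hh
    rw [IA_subst]
    exact hcl I _ (hypD_adm ba Xa argsA zcb zc cargs zdb zd dargs l2 u hd hh)
  hPs := by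
    rintro j B b X k G d hF ⟨b', X', args', rfl, hprot, hcl⟩
    have hne : ¬ (b = b' ∧ X = X') := by rintro ⟨rfl, rfl⟩; exact hF hprot
    rw [psubst_pvar_miss hne]
    exact ⟨b', X', args', rfl, hprot, hcl⟩
  hFeq := by
    rintro j B B' ⟨b', X', args', rfl, hprot, hcl⟩ hfe
    obtain ⟨args'', rfl, hfa⟩ := feq_pvar_inv hfe
    refine ⟨b', X', args'', rfl, hprot, ?_⟩
    intro I φ hh
    exact (IA_feq hE' I φ b' X' hfa g0).1 (hcl I φ hh)
  hPeel1 := by rintro j A u ⟨b', X', args', heq, -⟩; exact absurd heq (by simp)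
  hPeel2 := by rintro j A b X k G ⟨b', X', args', heq, -⟩; exact absurd heq (by simp)


theorem forall2_refl {E : Set (Tm × Tm)} (xs : List Tm) : List.Forall₂ (EqCns E) xs xs := by
  induction xs with
  | nil => exact .nil
  | cons a as ih => exact .cons (EqCns.refl a) ih

theorem forall2_trans {E : Set (Tm × Tm)} {xs ys zs : List Tm}
    (h1 : List.Forall₂ (EqCns E) xs ys) (h2 : List.Forall₂ (EqCns E) ys zs) :
    List.Forall₂ (EqCns E) xs zs := by
  induction h1 generalizing zs with
  | nil => cases h2; exact .nil
  | cons h t ih => cases h2 with | cons h' t' => exact .cons (h.trans h') (ih t')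

theorem forall2_symm {E : Set (Tm × Tm)} {xs ys : List Tm}
    (h : List.Forall₂ (EqCns E) xs ys) : List.Forall₂ (EqCns E) ys xs := by
  induction h with
  | nil => exact .nil
  | cons h t ih => exact .cons h.symm ih

theorem forall2_subst {E : Set (Tm × Tm)} {xs ys : List Tm}
    (h : List.Forall₂ (EqCns E) xs ys) (σ : ℕ → Tm) :
    List.Forall₂ (EqCns E) (xs.map (Tm.subst σ)) (ys.map (Tm.subst σ)) := by
  induction h with
  | nil => exact .nil
  | cons h t ih => exact .cons (eqcns_subst_stab h σ) ih

theorem gfam_arr_core {F : Bool → ℕ → Prop} {P : ℕ → Fml → Prop} {j : ℕ} {X Y : Fml}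
    (h : GFam F P j (.arr X Y)) : P j (.arr X Y) := by
  cases h with | core h => exact h

theorem gfam_pvar_core {F : Bool → ℕ → Prop} {P : ℕ → Fml → Prop} {j : ℕ} {b : Bool} {X : ℕ}
    {args : List Tm} (h : GFam F P j (.pvar b X args)) : P j (.pvar b X args) := by
  cases h with | core h => exact h

theorem map_liftBy_zero (c : ℕ) (args : List Tm) : args.map (Tm.liftBy c 0) = args := by
  induction args with
  | nil => rfl
  | cons a as ih => simp [liftBy_zero, ih]

theorem map_liftBy_add (c a b : ℕ) (args : List Tm) :
    (args.map (Tm.liftBy c a)).map (Tm.liftBy c b) = args.map (Tm.liftBy c (a+b)) := by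
  rw [List.map_map]
  apply List.map_congr_left
  intro t _
  simp only [Function.comp_apply]
  rw [liftBy_add]

theorem liftF_pvar (j : ℕ) (b : Bool) (X : ℕ) (args : List Tm) :
    liftF j (.pvar b X args) = .pvar b X (args.map (Tm.liftBy 0 j)) := by
  induction j with
  | zero => rw [map_liftBy_zero]; rfl
  | succ j ih =>
    show Fml.lift1By 0 1 (liftF j _) = _
    rw [ih]
    show Fml.pvar b X ((args.map (Tm.liftBy 0 j)).map (Tm.liftBy 0 1)) = _
    rw [map_liftBy_add]

theorem liftF_A2 (j : ℕ) :
    liftF j (A2f zcb zc cargs zdb zd dargs) =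
      .all1 (.arr (.pvar zcb zc (cargs.map (Tm.liftBy 1 j)))
        (.pvar zdb zd (dargs.map (Tm.liftBy 1 j)))) := by
  induction j with
  | zero => rw [map_liftBy_zero, map_liftBy_zero]; rfl
  | succ j ih =>
    show Fml.lift1By 0 1 (liftF j _) = _
    rw [ih]
    show Fml.all1 (.arr (.pvar zcb zc ((cargs.map (Tm.liftBy 1 j)).map (Tm.liftBy 1 1)))
      (.pvar zdb zd ((dargs.map (Tm.liftBy 1 j)).map (Tm.liftBy 1 1)))) = _
    rw [map_liftBy_add, map_liftBy_add]

theorem prot_a : fvC (Dctx ba Xa argsA zcb zc cargs zdb zd dargs n l2) ba Xa := by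
  refine ⟨liftF l2 (A1f ba Xa argsA), ?_, ?_⟩
  · unfold Dctx liftCtx
    simp
  · rw [fv2_liftF]
    exact ⟨rfl, rfl⟩

theorem prot_c : fvC (Dctx ba Xa argsA zcb zc cargs zdb zd dargs n l2) zcb zc := by
  refine ⟨A2f zcb zc cargs zdb zd dargs, by unfold Dctx; simp, ?_⟩
  unfold A2f
  exact Or.inl ⟨rfl, rfl⟩

theorem prot_d : fvC (Dctx ba Xa argsA zcb zc cargs zdb zd dargs n l2) zdb zd := by
  refine ⟨A2f zcb zc cargs zdb zd dargs, by unfold Dctx; simp, ?_⟩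
  unfold A2f
  exact Or.inr ⟨rfl, rfl⟩

/-- Family for the types of the iterator variable `f` (main shape). -/
def Pf (E : Set (Tm × Tm)) (jc : ℕ) (B : Fml) : Prop :=
  (∃ cargs' dargs', B = .all1 (.arr (.pvar zcb zc cargs') (.pvar zdb zd dargs')) ∧
    List.Forall₂ (EqCns E) cargs' (cargs.map (Tm.liftBy 1 jc)) ∧
    List.Forall₂ (EqCns E) dargs' (dargs.map (Tm.liftBy 1 jc))) ∨
  (∃ cargs' dargs' u, B = .arr (.pvar zcb zc cargs') (.pvar zdb zd dargs') ∧
    List.Forall₂ (EqCns E) cargs' (cargs.map (Tm.subst (iSub jc u))) ∧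
    List.Forall₂ (EqCns E) dargs' (dargs.map (Tm.subst (iSub jc u))))

theorem clos_pf :
    Clos E (fvC (Dctx ba Xa argsA zcb zc cargs zdb zd dargs n l2))
      (Pf zcb zc cargs zdb zd dargs E) where
  hSub := by
    rintro j d u B hd (⟨cargs', dargs', rfl, hc, hd'⟩ | ⟨cargs', dargs', u', rfl, hc, hd'⟩)
    · refine Or.inl ⟨cargs'.map (Tm.subst (Tm.up (upI d (sTop u)))),
        dargs'.map (Tm.subst (Tm.up (upI d (sTop u)))), rfl, ?_, ?_⟩
      · have h1 := forall2_subst hc (Tm.up (upI d (sTop u)))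
        rw [List.map_map] at h1
        have h2 : List.map (Tm.subst (Tm.up (upI d (sTop u))) ∘ Tm.liftBy 1 (j+1)) cargs =
            List.map (Tm.liftBy 1 j) cargs := by
          apply List.map_congr_left
          intro t _
          simp only [Function.comp_apply]
          rw [show Tm.up (upI d (sTop u)) = upI (d+1) (sTop u) from rfl]
          have := liftBy_subst_adm t 1 (j+1) (d+1) u (by omega) (by omega)
          simpa using this
        rwa [h2] at h1
      · have h1 := forall2_subst hd' (Tm.up (upI d (sTop u)))
        rw [List.map_map] at h1
        have h2 : List.map (Tm.subst (Tm.up (upI d (sTop u))) ∘ Tm.liftBy 1 (j+1)) dargs =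
            List.map (Tm.liftBy 1 j) dargs := by
          apply List.map_congr_left
          intro t _
          simp only [Function.comp_apply]
          rw [show Tm.up (upI d (sTop u)) = upI (d+1) (sTop u) from rfl]
          have := liftBy_subst_adm t 1 (j+1) (d+1) u (by omega) (by omega)
          simpa using this
        rwa [h2] at h1
    · refine Or.inr ⟨cargs'.map (Tm.subst (upI d (sTop u))),
        dargs'.map (Tm.subst (upI d (sTop u))), u'.subst (upI d (sTop u)), rfl, ?_, ?_⟩
      · have h1 := forall2_subst hc (upI d (sTop u))
        rw [List.map_map] at h1
        have h2 : List.map (Tm.subst (upI d (sTop u)) ∘ Tm.subst (iSub (j+1) u')) cargs =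
            List.map (Tm.subst (iSub j (u'.subst (upI d (sTop u))))) cargs := by
          apply List.map_congr_left
          intro t _
          simp only [Function.comp_apply]
          rw [subst_subst]
          congr 1
          funext i
          exact iSub_comp j u' d u hd i
        rwa [h2] at h1
      · have h1 := forall2_subst hd' (upI d (sTop u))
        rw [List.map_map] at h1
        have h2 : List.map (Tm.subst (upI d (sTop u)) ∘ Tm.subst (iSub (j+1) u')) dargs =
            List.map (Tm.subst (iSub j (u'.subst (upI d (sTop u))))) dargs := by
          apply List.map_congr_left
          intro t _
          simp only [Function.comp_apply]
          rw [subst_subst]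
          congr 1
          funext i
          exact iSub_comp j u' d u hd i
        rwa [h2] at h1
  hPs := by
    rintro j B b X k G d hF (⟨cargs', dargs', rfl, hc, hd'⟩ | ⟨cargs', dargs', u', rfl, hc, hd'⟩)
    · have hnc : ¬ (b = zcb ∧ X = zc) := by
        rintro ⟨h1, h2⟩
        rw [h1, h2] at hF
        exact hF (prot_c ba Xa argsA zcb zc cargs zdb zd dargs n l2)
      have hnd : ¬ (b = zdb ∧ X = zd) := by
        rintro ⟨h1, h2⟩
        rw [h1, h2] at hF
        exact hF (prot_d ba Xa argsA zcb zc cargs zdb zd dargs n l2)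
      refine Or.inl ⟨cargs', dargs', ?_, hc, hd'⟩
      show Fml.all1 (Fml.psubst b X k G (d+1) _) = _
      show Fml.all1 (.arr (Fml.psubst b X k G (d+1) _) (Fml.psubst b X k G (d+1) _)) = _
      rw [psubst_pvar_miss hnc, psubst_pvar_miss hnd]
    · have hnc : ¬ (b = zcb ∧ X = zc) := by
        rintro ⟨h1, h2⟩
        rw [h1, h2] at hF
        exact hF (prot_c ba Xa argsA zcb zc cargs zdb zd dargs n l2)
      have hnd : ¬ (b = zdb ∧ X = zd) := by
        rintro ⟨h1, h2⟩
        rw [h1, h2] at hF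
        exact hF (prot_d ba Xa argsA zcb zc cargs zdb zd dargs n l2)
      refine Or.inr ⟨cargs', dargs', u', ?_, hc, hd'⟩
      show Fml.arr (Fml.psubst b X k G d _) (Fml.psubst b X k G d _) = _
      rw [psubst_pvar_miss hnc, psubst_pvar_miss hnd]
  hFeq := by
    rintro j B B' (⟨cargs', dargs', rfl, hc, hd'⟩ | ⟨cargs', dargs', u', rfl, hc, hd'⟩) hfe
    · obtain ⟨W', rfl, hfW⟩ := feq_all1_inv hfe
      obtain ⟨P', Q', rfl, hfP, hfQ⟩ := feq_arr_inv hfW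
      obtain ⟨ca'', rfl, hfc⟩ := feq_pvar_inv hfP
      obtain ⟨da'', rfl, hfd⟩ := feq_pvar_inv hfQ
      refine Or.inl ⟨ca'', da'', rfl, ?_, ?_⟩
      · exact forall2_trans (forall2_symm hfc) hc
      · exact forall2_trans (forall2_symm hfd) hd'
    · obtain ⟨P', Q', rfl, hfP, hfQ⟩ := feq_arr_inv hfe
      obtain ⟨ca'', rfl, hfc⟩ := feq_pvar_inv hfP
      obtain ⟨da'', rfl, hfd⟩ := feq_pvar_inv hfQ
      refine Or.inr ⟨ca'', da'', u', rfl, ?_, ?_⟩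
      · exact forall2_trans (forall2_symm hfc) hc
      · exact forall2_trans (forall2_symm hfd) hd'
  hPeel1 := by
    rintro j A u (⟨cargs', dargs', heq, hc, hd'⟩ | ⟨cargs', dargs', u', heq, hc, hd'⟩)
    · cases heq
      refine Or.inr ⟨cargs'.map (Tm.subst (sTop u)), dargs'.map (Tm.subst (sTop u)), u, rfl,
        ?_, ?_⟩
      · have h1 := forall2_subst hc (sTop u)
        rw [List.map_map] at h1
        have h2 : List.map (Tm.subst (sTop u) ∘ Tm.liftBy 1 j) cargs =
            List.map (Tm.subst (iSub j u)) cargs := by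
          apply List.map_congr_left
          intro t _
          simp only [Function.comp_apply]
          exact liftBy1_sTop t j u
        rwa [h2] at h1
      · have h1 := forall2_subst hd' (sTop u)
        rw [List.map_map] at h1
        have h2 : List.map (Tm.subst (sTop u) ∘ Tm.liftBy 1 j) dargs =
            List.map (Tm.subst (iSub j u)) dargs := by
          apply List.map_congr_left
          intro t _
          simp only [Function.comp_apply]
          exact liftBy1_sTop t j u
        rwa [h2] at h1
    · exact absurd heq (by simp)
  hPeel2 := by
    rintro j A b X k G (⟨cargs', dargs', heq, -⟩ | ⟨cargs', dargs', u', heq, -⟩) <;>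
      exact absurd heq (by simp)


/-- The inner induction: semantic claims for the types of `churchBody`. -/
theorem inner_thm (hE' : Adequate E) : ∀ (mm l : ℕ) (B : Fml),
    DerB E (liftCtx l (Dctx ba Xa argsA zcb zc cargs zdb zd dargs n l2)) (churchBody mm) B →
    GFam (fvC (Dctx ba Xa argsA zcb zc cargs zdb zd dargs n l2))
      (Pclaim ba Xa argsA zcb zc cargs zdb zd dargs n l2 mm) l B := by
  intro mm
  induction mm with
  | zero =>
    intro l B h
    have hg := gen h _ l rfl
    obtain ⟨l', A0, hget, hstar⟩ := hg
    have hA0 : A0 = liftF l2 (A1f ba Xa argsA) := by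
      unfold Dctx liftCtx at hget
      simp at hget
      exact hget.symm
    subst hA0
    refine star_invariant (clos_pclaim ba Xa argsA zcb zc cargs zdb zd dargs n l2 hE' 0)
      hstar ?_
    rw [show A1f ba Xa argsA = Fml.pvar ba Xa argsA from rfl, liftF_pvar, liftF_pvar,
      map_liftBy_add]
    refine ⟨ba, Xa, argsA.map (Tm.liftBy 0 (l2 + l')), rfl,
      prot_a ba Xa argsA zcb zc cargs zdb zd dargs n l2, ?_⟩
    intro I φ hh
    have := hh.1
    rwa [Nat.add_comm l' l2] at this
  | succ mm ih =>
    intro l B h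
    have hg := gen h _ l rfl
    obtain ⟨l', A', B3, hf, hx, hstar⟩ := hg
    -- analyse the type of `var 0`
    have hgf := gen hf _ l' rfl
    obtain ⟨l'', A0, hget0, hstarf⟩ := hgf
    have hA0 : A0 = A2f zcb zc cargs zdb zd dargs := by
      unfold Dctx at hget0
      simp at hget0
      exact hget0.symm
    subst hA0
    have hPf : Pf zcb zc cargs zdb zd dargs E l' (.arr A' B3) := by
      refine gfam_arr_core (star_invariant
        (clos_pf ba Xa argsA zcb zc cargs zdb zd dargs n l2) hstarf ?_)
      rw [liftF_A2]
      exact Or.inl ⟨_, _, rfl, forall2_refl _, forall2_refl _⟩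
    rcases hPf with ⟨cargs', dargs', heq, -⟩ | ⟨cargs', dargs', u, heq, hc, hd'⟩
    · exact absurd heq (by simp)
    · obtain ⟨rfl, rfl⟩ : A' = .pvar zcb zc cargs' ∧ B3 = .pvar zdb zd dargs' := by
        injection heq with h1 h2; exact ⟨h1, h2⟩
      -- the IH applied to the argument
      have hxc := gfam_pvar_core (ih l' _ hx)
      obtain ⟨b'', X'', args'', heqA, -, hcl⟩ := hxc
      obtain ⟨rfl, rfl, rfl⟩ : zcb = b'' ∧ zc = X'' ∧ cargs' = args'' := by
        injection heqA with h1 h2 h3; exact ⟨h1, h2, h3⟩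
      -- build the claim for B3
      refine star_invariant (clos_pclaim ba Xa argsA zcb zc cargs zdb zd dargs n l2 hE' (mm+1))
        hstar ⟨zdb, zd, dargs', rfl,
          prot_d ba Xa argsA zcb zc cargs zdb zd dargs n l2, ?_⟩
      intro I φ hh
      have h1 : IA I φ zcb zc cargs' mm := hcl I φ hh
      have h2 : IA I φ zcb zc (cargs.map (Tm.subst (iSub l' u))) mm :=
        (IA_feq hE' I φ zcb zc hc mm).1 h1
      have h3 := (IA_iSub_eval I φ l' u zcb zc cargs mm).1 h2
      have h4 := (IA_lift1_eval I φ (tmval φ u) l' zcb zc cargs mm).2 h3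
      have h5 := hh.2 (tmval φ u) mm h4
      have h6 := (IA_lift1_eval I φ (tmval φ u) l' zdb zd dargs (mm+1)).1 h5
      have h7 := (IA_iSub_eval I φ l' u zdb zd dargs (mm+1)).2 h6
      exact (IA_feq hE' I φ zdb zd hd' (mm+1)).2 h7

end Inner

/-! ### Root tracking -/

def IsPv : Fml → Prop
  | .pvar _ _ _ => True
  | _ => False

theorem notpv_subst1 {A : Fml} (h : ¬ IsPv A) (σ : ℕ → Tm) : ¬ IsPv (A.subst1 σ) := by
  cases A <;> simp [IsPv, Fml.subst1] at * <;> trivial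

theorem notpv_psubst {A : Fml} (h : ¬ IsPv A) (b : Bool) (X k : ℕ) (G : Fml) (d : ℕ) :
    ¬ IsPv (Fml.psubst b X k G d A) := by
  cases A with
  | pvar b' X' args => exact absurd trivial h
  | arr P Q => intro hc; exact hc
  | all1 W => intro hc; exact hc
  | all2 b' X' k' W =>
    intro hc
    by_cases hcc : b = b' ∧ X = X' <;>
      simp only [Fml.psubst, hcc, if_true, if_false, IsPv] at hc <;> exact hc
theorem notpv_feq {E : Set (Tm × Tm)} {A B : Fml} (h : ¬ IsPv A) (hfe : FEq E A B) :
    ¬ IsPv B := by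
  cases A with
  | pvar b X args => exact absurd trivial h
  | arr P Q => obtain ⟨-, -, rfl, -⟩ := feq_arr_inv hfe; exact h
  | all1 W => obtain ⟨-, rfl, -⟩ := feq_all1_inv hfe; exact h
  | all2 b X k W => obtain ⟨W', rfl, -⟩ := feq_all2_inv hfe; exact h

/-! ### The inner analysis for `churchBody 0` with arbitrary iterator type -/

section Inner0
variable {E : Set (Tm × Tm)}
variable (ba : Bool) (Xa : ℕ) (argsA : List Tm) (A2 : Fml) (n l2 : ℕ)

def Dctx0 : List Fml := A2 :: liftCtx l2 [A1f ba Xa argsA, C0f n]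

theorem prot0_a : fvC (Dctx0 ba Xa argsA A2 n l2) ba Xa := by
  refine ⟨liftF l2 (A1f ba Xa argsA), ?_, ?_⟩
  · unfold Dctx0 liftCtx
    simp
  · rw [fv2_liftF]
    exact ⟨rfl, rfl⟩

def P0claim (jc : ℕ) (B : Fml) : Prop :=
  ∃ b' X' args', B = .pvar b' X' args' ∧ fvC (Dctx0 ba Xa argsA A2 n l2) b' X' ∧
    ∀ I φ, IA I φ ba Xa (argsA.map (Tm.liftBy 0 (jc + l2))) 0 → IA I φ b' X' args' 0

theorem clos_p0claim (hE' : Adequate E) :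
    Clos E (fvC (Dctx0 ba Xa argsA A2 n l2)) (P0claim ba Xa argsA A2 n l2) where
  hSub := by
    rintro j d u B hd ⟨b', X', args', rfl, hprot, hcl⟩
    refine ⟨b', X', args'.map (Tm.subst (upI d (sTop u))), rfl, hprot, ?_⟩
    intro I φ hh
    rw [IA_subst]
    refine hcl I _ ?_
    have := (IA_adm I φ (j + 1 + l2) d u (by omega) ba Xa argsA 0).2
    have h2 : j + 1 + l2 - 1 = j + l2 := by omega
    rw [h2] at this
    exact this hh
  hPs := by
    rintro j B b X k G d hF ⟨b', X', args', rfl, hprot, hcl⟩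
    have hne : ¬ (b = b' ∧ X = X') := by rintro ⟨rfl, rfl⟩; exact hF hprot
    rw [psubst_pvar_miss hne]
    exact ⟨b', X', args', rfl, hprot, hcl⟩
  hFeq := by
    rintro j B B' ⟨b', X', args', rfl, hprot, hcl⟩ hfe
    obtain ⟨args'', rfl, hfa⟩ := feq_pvar_inv hfe
    exact ⟨b', X', args'', rfl, hprot, fun I φ hh => (IA_feq hE' I φ b' X' hfa 0).1 (hcl I φ hh)⟩
  hPeel1 := by rintro j A u ⟨b', X', args', heq, -⟩; exact absurd heq (by simp)
  hPeel2 := by rintro j A b X k G ⟨b', X', args', heq, -⟩; exact absurd heq (by simp)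

theorem inner0_thm (hE' : Adequate E) (l : ℕ) (B : Fml)
    (h : DerB E (liftCtx l (Dctx0 ba Xa argsA A2 n l2)) (churchBody 0) B) :
    GFam (fvC (Dctx0 ba Xa argsA A2 n l2)) (P0claim ba Xa argsA A2 n l2) l B := by
  have hg := gen h _ l rfl
  obtain ⟨l', A0, hget, hstar⟩ := hg
  have hA0 : A0 = liftF l2 (A1f ba Xa argsA) := by
    unfold Dctx0 liftCtx at hget
    simp at hget
    exact hget.symm
  subst hA0
  refine star_invariant (clos_p0claim ba Xa argsA A2 n l2 hE') hstar ?_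
  rw [show A1f ba Xa argsA = Fml.pvar ba Xa argsA from rfl, liftF_pvar, liftF_pvar,
    map_liftBy_add]
  refine ⟨ba, Xa, argsA.map (Tm.liftBy 0 (l2 + l')), rfl, prot0_a ba Xa argsA A2 n l2, ?_⟩
  intro I φ hh
  rwa [Nat.add_comm l' l2] at hh

/-! Stuck families: the iterator variable can never acquire an arrow type. -/

def Pstuck (zb : Bool) (zX : ℕ) (_ : ℕ) (B : Fml) : Prop :=
  (∃ args', B = .pvar zb zX args') ∨ (∃ args', B = .all1 (.pvar zb zX args'))

theorem clos_pstuck {zb : Bool} {zX : ℕ} (hprot : fvC (Dctx0 ba Xa argsA A2 n l2) zb zX) :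
    Clos E (fvC (Dctx0 ba Xa argsA A2 n l2)) (Pstuck zb zX) where
  hSub := by
    rintro j d u B hd (⟨args', rfl⟩ | ⟨args', rfl⟩)
    · exact Or.inl ⟨_, rfl⟩
    · exact Or.inr ⟨_, rfl⟩
  hPs := by
    rintro j B b X k G d hF (⟨args', rfl⟩ | ⟨args', rfl⟩) <;>
    · have hne : ¬ (b = zb ∧ X = zX) := by rintro ⟨rfl, rfl⟩; exact hF hprot
      first
      | (rw [psubst_pvar_miss hne]; exact Or.inl ⟨_, rfl⟩)
      | (show Pstuck zb zX j (.all1 (Fml.psubst b X k G (d+1) _))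
         rw [psubst_pvar_miss hne]
         exact Or.inr ⟨_, rfl⟩)
  hFeq := by
    rintro j B B' (⟨args', rfl⟩ | ⟨args', rfl⟩) hfe
    · obtain ⟨args'', rfl, -⟩ := feq_pvar_inv hfe
      exact Or.inl ⟨_, rfl⟩
    · obtain ⟨W', rfl, hfW⟩ := feq_all1_inv hfe
      obtain ⟨args'', rfl, -⟩ := feq_pvar_inv hfW
      exact Or.inr ⟨_, rfl⟩
  hPeel1 := by
    rintro j A u (⟨args', heq⟩ | ⟨args', heq⟩)
    · exact absurd heq (by simp)
    · cases heq
      exact Or.inl ⟨_, rfl⟩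
  hPeel2 := by
    rintro j A b X k G (⟨args', heq⟩ | ⟨args', heq⟩) <;> exact absurd heq (by simp)

theorem liftF_all1pvar (zb : Bool) (zX : ℕ) (args' : List Tm) (j : ℕ) :
    liftF j (.all1 (.pvar zb zX args')) =
      Fml.all1 (.pvar zb zX (args'.map (Tm.liftBy 1 j))) := by
  induction j with
  | zero => rw [map_liftBy_zero]; rfl
  | succ j ih =>
    show Fml.lift1By 0 1 (liftF j _) = _
    rw [ih]
    show Fml.all1 (.pvar zb zX ((args'.map (Tm.liftBy 1 j)).map (Tm.liftBy 1 1))) = _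
    rw [map_liftBy_add]

/-- If the iterator type is a (possibly `all1`-wrapped) protected atom, `var 0` has no
arrow type, so `churchBody (mm+1)` is untypable. -/
theorem stuck_kill (hstuck : Pstuck zb zX l2' A2)
    (hprot : fvC (Dctx0 ba Xa argsA A2 n l2) zb zX)
    {mm l : ℕ} {B : Fml}
    (h : DerB E (liftCtx l (Dctx0 ba Xa argsA A2 n l2)) (churchBody (mm+1)) B) : False := by
  have hg := gen h _ l rfl
  obtain ⟨l', A', B3, hf, -, -⟩ := hg
  have hgf := gen hf _ l' rfl
  obtain ⟨l'', A0, hget0, hstarf⟩ := hgf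
  have hA0 : A0 = A2 := by
    unfold Dctx0 at hget0
    simp at hget0
    exact hget0.symm
  rw [hA0] at hstarf
  clear hA0 hget0
  suffices hinit : Pstuck zb zX l'' (liftF l'' A2) by
    have hfin := gfam_arr_core (star_invariant (clos_pstuck ba Xa argsA A2 n l2 hprot)
      hstarf hinit)
    rcases hfin with ⟨args', heq⟩ | ⟨args', heq⟩ <;> exact absurd heq (by simp)
  rcases hstuck with ⟨args', rfl⟩ | ⟨args', rfl⟩
  · rw [liftF_pvar]; exact Or.inl ⟨_, rfl⟩
  · rw [liftF_all1pvar]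
    exact Or.inr ⟨_, rfl⟩

end Inner0




/-! ### Interpretation update helpers -/

theorem IA_updI_hit (I : Bool → ℕ → List ℕ → ℕ → Prop) (P : List ℕ → ℕ → Prop) (φv : ℕ → ℕ)
    (b : Bool) (X : ℕ) (args : List Tm) (g : ℕ) :
    IA (updI I b X P) φv b X args g ↔ P (args.map (tmval φv)) g := by
  unfold IA updI
  simp

theorem IA_updI_miss (I : Bool → ℕ → List ℕ → ℕ → Prop) (P : List ℕ → ℕ → Prop) (φv : ℕ → ℕ)
    {b b' : Bool} {X X' : ℕ} (hne : ¬ (b' = b ∧ X' = X)) (args : List Tm) (g : ℕ) :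
    IA (updI I b X P) φv b' X' args g ↔ IA I φv b' X' args g := by
  unfold IA updI
  simp [hne]

theorem psubst_hit_pvarG (b : Bool) (X k : ℕ) (bg : Bool) (Xg : ℕ) (gargs : List Tm)
    (D : ℕ) (args : List Tm) :
    Fml.psubst b X k (.pvar bg Xg gargs) D (.pvar b X args) =
      .pvar bg Xg (gargs.map (fun t => (t.liftBy k D).subst (σkA k args))) := by
  rw [psubst_pvar_hit]
  show Fml.subst1 _ (.pvar bg Xg (gargs.map (Tm.liftBy k D))) = _
  show Fml.pvar bg Xg ((gargs.map (Tm.liftBy k D)).map (Tm.subst (σkA k args))) = _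
  rw [List.map_map]
  rfl

theorem notpv_instArgs {G : Fml} (hG : ¬ IsPv G) (k D : ℕ) (σ : ℕ → Tm) :
    ¬ IsPv ((G.lift1By k D).subst1 σ) := by
  cases G with
  | pvar b X args => exact absurd trivial hG
  | arr P Q => intro hc; exact hc
  | all1 W => intro hc; exact hc
  | all2 b X kk W => intro hc; exact hc

/-- Full atom-transfer for a `psubst` step with an atomic `G`, at depth `dep`. -/
theorem IA_ps_transfer (I : Bool → ℕ → List ℕ → ℕ → Prop) (φ : ℕ → ℕ)
    (b : Bool) (X k : ℕ) (bg : Bool) (Xg : ℕ) (gargs : List Tm) (d : ℕ)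
    {φv : ℕ → ℕ} {dep : ℕ} (hφ : ∀ i, φv (i + dep) = φ i)
    (b' : Bool) (X' : ℕ) (args : List Tm) (g : ℕ) :
    IA (updI I b X (Gsem I φ k bg Xg gargs d)) φv b' X' args g ↔
      ∀ C, Fml.psubst b X k (.pvar bg Xg gargs) (d + dep) (.pvar b' X' args) =
        C → ∃ b'' X'' args'', C = .pvar b'' X'' args'' ∧ IA I φv b'' X'' args'' g := by
  by_cases hc : b' = b ∧ X' = X
  · obtain ⟨rfl, rfl⟩ := hc
    rw [IA_updI_hit, gsem_eval I hφ k d bg Xg gargs args g]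
    constructor
    · intro h C hC
      rw [psubst_hit_pvarG] at hC
      exact ⟨_, _, _, hC.symm, h⟩
    · intro h
      obtain ⟨b'', X'', args'', hC, hIA⟩ := h _ rfl
      rw [psubst_hit_pvarG] at hC
      injection hC with h1 h2 h3
      subst h1; subst h2; subst h3
      exact hIA
  · rw [IA_updI_miss I _ φv hc]
    constructor
    · intro h C hC
      rw [psubst_pvar_miss (by tauto)] at hC
      exact ⟨_, _, _, hC.symm, h⟩
    · intro h
      obtain ⟨b'', X'', args'', hC, hIA⟩ := h _ rfl
      rw [psubst_pvar_miss (by tauto)] at hC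
      injection hC with h1 h2 h3
      subst h1; subst h2; subst h3
      exact hIA



/-! ### Positive atom truth and the outer (CH1) family -/

def IAp (I : Bool → ℕ → List ℕ → ℕ → Prop) (φ : ℕ → ℕ) (A : Fml) (g : ℕ) : Prop :=
  ∃ b X args, A = .pvar b X args ∧ IA I φ b X args g

theorem IAp_pvar (I : Bool → ℕ → List ℕ → ℕ → Prop) (φ : ℕ → ℕ) (b : Bool) (X : ℕ)
    (args : List Tm) (g : ℕ) : IAp I φ (.pvar b X args) g ↔ IA I φ b X args g := by
  constructor
  · rintro ⟨b', X', args', heq, h⟩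
    injection heq with h1 h2 h3
    subst h1; subst h2; subst h3
    exact h
  · intro h
    exact ⟨b, X, args, rfl, h⟩

theorem IAp_ps_transfer (I : Bool → ℕ → List ℕ → ℕ → Prop) (φ : ℕ → ℕ)
    (b : Bool) (X k : ℕ) (bg : Bool) (Xg : ℕ) (gargs : List Tm) (d : ℕ)
    {φv : ℕ → ℕ} {dep : ℕ} (hφ : ∀ i, φv (i + dep) = φ i)
    (b' : Bool) (X' : ℕ) (args : List Tm) (g : ℕ) :
    IA (updI I b X (Gsem I φ k bg Xg gargs d)) φv b' X' args g ↔
      IAp I φv (Fml.psubst b X k (.pvar bg Xg gargs) (d + dep) (.pvar b' X' args)) g := by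
  rw [IA_ps_transfer I φ b X k bg Xg gargs d hφ b' X' args g]
  constructor
  · intro h
    obtain ⟨b'', X'', args'', hC, hIA⟩ := h _ rfl
    exact ⟨_, _, _, hC, hIA⟩
  · rintro ⟨b'', X'', args'', hC, hIA⟩ C hC2
    subst hC2
    exact ⟨_, _, _, hC, hIA⟩

theorem ispv_psubst_pvarG (b : Bool) (X k : ℕ) (bg : Bool) (Xg : ℕ) (gargs : List Tm)
    (D : ℕ) (b' : Bool) (X' : ℕ) (args : List Tm) :
    IsPv (Fml.psubst b X k (.pvar bg Xg gargs) D (.pvar b' X' args)) := by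
  by_cases hc : b = b' ∧ X = X'
  · obtain ⟨rfl, rfl⟩ := hc
    rw [psubst_hit_pvarG]
    trivial
  · rw [psubst_pvar_miss hc]
    trivial

theorem psubst_atom_id_of_nonpvG {G : Fml} (hG : ¬ IsPv G) (b : Bool) (X k D : ℕ)
    (b' : Bool) (X' : ℕ) (args : List Tm)
    (h : IsPv (Fml.psubst b X k G D (.pvar b' X' args))) :
    Fml.psubst b X k G D (.pvar b' X' args) = .pvar b' X' args := by
  by_cases hc : b = b' ∧ X = X'
  · obtain ⟨rfl, rfl⟩ := hc
    rw [psubst_pvar_hit] at h ⊢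
    exact absurd h (notpv_instArgs hG k D _)
  · rw [psubst_pvar_miss hc]

section Outer1
variable {E : Set (Tm × Tm)}
variable (ba : Bool) (Xa : ℕ) (argsA : List Tm) (n m : ℕ)

def F1c : Bool → ℕ → Prop := fvC [A1f ba Xa argsA, C0f n]

theorem protA1 : F1c ba Xa argsA n ba Xa :=
  ⟨A1f ba Xa argsA, by simp, ⟨rfl, rfl⟩⟩

/-- The graded semantic invariant carried along the first outer chain. -/
def Psi1 (jc : ℕ) (P Q Y : Fml) : Prop :=
  ∀ I φ, IA I φ ba Xa (argsA.map (Tm.liftBy 0 jc)) 0 →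
    (∀ kk g, IAp I (kcons kk φ) P g → IAp I (kcons kk φ) Q (g+1)) →
    IAp I φ Y m

def Ps1 (jc : ℕ) (B : Fml) : Prop :=
  ∃ P Q Y, B = .arr (.all1 (.arr P Q)) Y ∧
    ((IsPv P ∧ IsPv Q ∧ IsPv Y ∧ Psi1 ba Xa argsA m jc P Q Y) ∨
      ¬ IsPv P ∨ ¬ IsPv Q ∨ ¬ IsPv Y)

theorem clos_ps1 (hE' : Adequate E) : Clos E (F1c ba Xa argsA n) (Ps1 ba Xa argsA m) where
  hSub := by
    rintro j d u B hd ⟨P, Q, Y, rfl, hcase⟩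
    refine ⟨P.subst1 (Tm.up (upI d (sTop u))), Q.subst1 (Tm.up (upI d (sTop u))),
      Y.subst1 (upI d (sTop u)), rfl, ?_⟩
    rcases hcase with ⟨hP, hQ, hY, hΨ⟩ | hP | hQ | hY
    · refine Or.inl ⟨?_, ?_, ?_, ?_⟩
      · cases P <;> first | trivial | exact absurd hP (by intro hc; exact hc)
      · cases Q <;> first | trivial | exact absurd hQ (by intro hc; exact hc)
      · cases Y <;> first | trivial | exact absurd hY (by intro hc; exact hc)
      · cases P with
        | pvar b2 X2 a2 =>
          cases Q with
          | pvar b3 X3 a3 =>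
            cases Y with
            | pvar b4 X4 a4 =>
              intro I φ hx hstep
              simp only [subst1_pvar] at hstep ⊢
              set φ' := fun i => tmval φ (upI d (sTop u) i) with hφ'
              have hx' : IA I φ' ba Xa (argsA.map (Tm.liftBy 0 (j+1))) 0 := by
                have h1 := (IA_adm I φ (j+1) d u (by omega) ba Xa argsA 0).2
                have h2 : j + 1 - 1 = j := by omega
                rw [h2] at h1
                exact h1 hx
              have hstep' : ∀ kk g, IAp I (kcons kk φ') (.pvar b2 X2 a2) g →
                  IAp I (kcons kk φ') (.pvar b3 X3 a3) (g+1) := by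
                intro kk g hh
                rw [IAp_pvar] at hh ⊢
                have h1 := (IA_subst_up I φ (upI d (sTop u)) kk b2 X2 a2 g).2 hh
                have h2 := hstep kk g (by rw [IAp_pvar]; exact h1)
                rw [IAp_pvar] at h2
                exact (IA_subst_up I φ (upI d (sTop u)) kk b3 X3 a3 (g+1)).1 h2
              have hc := hΨ I φ' hx' hstep'
              rw [IAp_pvar] at hc ⊢
              exact (IA_subst I φ (upI d (sTop u)) b4 X4 a4 m).2 hc
            | _ => exact absurd hY (by intro hc; exact hc)
          | _ => exact absurd hQ (by intro hc; exact hc)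
        | _ => exact absurd hP (by intro hc; exact hc)
    · exact Or.inr (Or.inl (notpv_subst1 hP _))
    · exact Or.inr (Or.inr (Or.inl (notpv_subst1 hQ _)))
    · exact Or.inr (Or.inr (Or.inr (notpv_subst1 hY _)))
  hPs := by
    rintro j B b X k G d hF ⟨P, Q, Y, rfl, hcase⟩
    refine ⟨Fml.psubst b X k G (d+1) P, Fml.psubst b X k G (d+1) Q, Fml.psubst b X k G d Y,
      rfl, ?_⟩
    rcases hcase with ⟨hP, hQ, hY, hΨ⟩ | hP | hQ | hY
    · by_cases hG : IsPv G
      · -- atomic G: transfer the invariant through the reinterpretation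
        cases G with
        | pvar bg Xg gargs =>
          cases P with
          | pvar b2 X2 a2 =>
            cases Q with
            | pvar b3 X3 a3 =>
              cases Y with
              | pvar b4 X4 a4 =>
                refine Or.inl ⟨ispv_psubst_pvarG b X k bg Xg gargs (d+1) b2 X2 a2,
                  ispv_psubst_pvarG b X k bg Xg gargs (d+1) b3 X3 a3,
                  ispv_psubst_pvarG b X k bg Xg gargs d b4 X4 a4, ?_⟩
                intro I φ hx hstep
                set I' := updI I b X (Gsem I φ k bg Xg gargs d) with hI'
                have hne : ¬ (ba = b ∧ Xa = X) := by
                  rintro ⟨rfl, rfl⟩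
                  exact hF (protA1 ba Xa argsA n)
                have hx' : IA I' φ ba Xa (argsA.map (Tm.liftBy 0 j)) 0 :=
                  (IA_updI_miss I _ φ hne _ 0).2 hx
                have hstep' : ∀ kk g, IAp I' (kcons kk φ) (.pvar b2 X2 a2) g →
                    IAp I' (kcons kk φ) (.pvar b3 X3 a3) (g+1) := by
                  intro kk g hh
                  rw [IAp_pvar] at hh ⊢
                  rw [IAp_ps_transfer I φ b X k bg Xg gargs d
                    (φv := kcons kk φ) (dep := 1) (fun i => rfl) b2 X2 a2 g] at hh
                  rw [IAp_ps_transfer I φ b X k bg Xg gargs d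
                    (φv := kcons kk φ) (dep := 1) (fun i => rfl) b3 X3 a3 (g+1)]
                  exact hstep kk g hh
                have hc := hΨ I' φ hx' hstep'
                rw [IAp_pvar] at hc
                rw [IAp_ps_transfer I φ b X k bg Xg gargs d
                  (φv := φ) (dep := 0) (fun i => rfl) b4 X4 a4 m] at hc
                rw [show d + 0 = d from rfl] at hc
                exact hc
              | _ => exact absurd hY (by intro hc; exact hc)
            | _ => exact absurd hQ (by intro hc; exact hc)
          | _ => exact absurd hP (by intro hc; exact hc)
        | _ => exact absurd hG (by intro hc; exact hc)
      · -- non-atomic G: any replaced position is poisoned, otherwise nothing changes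
        cases P with
        | pvar b2 X2 a2 =>
          cases Q with
          | pvar b3 X3 a3 =>
            cases Y with
            | pvar b4 X4 a4 =>
              by_cases h2 : IsPv (Fml.psubst b X k G (d+1) (.pvar b2 X2 a2))
              · by_cases h3 : IsPv (Fml.psubst b X k G (d+1) (.pvar b3 X3 a3))
                · by_cases h4 : IsPv (Fml.psubst b X k G d (.pvar b4 X4 a4))
                  · rw [psubst_atom_id_of_nonpvG hG b X k (d+1) b2 X2 a2 h2,
                      psubst_atom_id_of_nonpvG hG b X k (d+1) b3 X3 a3 h3,
                      psubst_atom_id_of_nonpvG hG b X k d b4 X4 a4 h4]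
                    exact Or.inl ⟨trivial, trivial, trivial, hΨ⟩
                  · exact Or.inr (Or.inr (Or.inr h4))
                · exact Or.inr (Or.inr (Or.inl h3))
              · exact Or.inr (Or.inl h2)
            | _ => exact absurd hY (by intro hc; exact hc)
          | _ => exact absurd hQ (by intro hc; exact hc)
        | _ => exact absurd hP (by intro hc; exact hc)
    · exact Or.inr (Or.inl (notpv_psubst hP b X k G (d+1)))
    · exact Or.inr (Or.inr (Or.inl (notpv_psubst hQ b X k G (d+1))))
    · exact Or.inr (Or.inr (Or.inr (notpv_psubst hY b X k G d)))
  hFeq := by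
    rintro j B B' ⟨P, Q, Y, rfl, hcase⟩ hfe
    obtain ⟨M', Y', rfl, hfM, hfY⟩ := feq_arr_inv hfe
    obtain ⟨W', rfl, hfW⟩ := feq_all1_inv hfM
    obtain ⟨P', Q', rfl, hfP, hfQ⟩ := feq_arr_inv hfW
    refine ⟨P', Q', Y', rfl, ?_⟩
    rcases hcase with ⟨hP, hQ, hY, hΨ⟩ | hP | hQ | hY
    · cases P with
      | pvar b2 X2 a2 =>
        cases Q with
        | pvar b3 X3 a3 =>
          cases Y with
          | pvar b4 X4 a4 =>
            obtain ⟨a2', rfl, hf2⟩ := feq_pvar_inv hfP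
            obtain ⟨a3', rfl, hf3⟩ := feq_pvar_inv hfQ
            obtain ⟨a4', rfl, hf4⟩ := feq_pvar_inv hfY
            refine Or.inl ⟨trivial, trivial, trivial, ?_⟩
            intro I φ hx hstep
            have hstep' : ∀ kk g, IAp I (kcons kk φ) (.pvar b2 X2 a2) g →
                IAp I (kcons kk φ) (.pvar b3 X3 a3) (g+1) := by
              intro kk g hh
              rw [IAp_pvar] at hh ⊢
              have h1 := (IA_feq hE' I (kcons kk φ) b2 X2 hf2 g).1 hh
              have h2 := hstep kk g (by rw [IAp_pvar]; exact h1)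
              rw [IAp_pvar] at h2
              exact (IA_feq hE' I (kcons kk φ) b3 X3 hf3 (g+1)).2 h2
            have hc := hΨ I φ hx hstep'
            rw [IAp_pvar] at hc ⊢
            exact (IA_feq hE' I φ b4 X4 hf4 m).1 hc
          | _ => exact absurd hY (by intro hc; exact hc)
        | _ => exact absurd hQ (by intro hc; exact hc)
      | _ => exact absurd hP (by intro hc; exact hc)
    · exact Or.inr (Or.inl (notpv_feq hP hfP))
    · exact Or.inr (Or.inr (Or.inl (notpv_feq hQ hfQ)))
    · exact Or.inr (Or.inr (Or.inr (notpv_feq hY hfY)))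
  hPeel1 := by rintro j A u ⟨P, Q, Y, heq, -⟩; exact absurd heq (by simp)
  hPeel2 := by rintro j A b X k G ⟨P, Q, Y, heq, -⟩; exact absurd heq (by simp)

end Outer1


/-! ### The outer (CH2) family and the `m = 0` variants -/

theorem cflow_notpv {E : Set (Tm × Tm)} {F : Bool → ℕ → Prop} {X Z : Fml}
    (h : CFlow E F X Z) (hX : ¬ IsPv X) : ¬ IsPv Z := by
  induction h with
  | refl => exact hX
  | tail _ hstep ih =>
    rcases hstep with ⟨σ, rfl⟩ | ⟨b, Z', k, G, d, hF, rfl⟩ | hfe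
    · exact notpv_subst1 ih _
    · exact notpv_psubst ih _ _ _ _ _
    · exact notpv_feq ih hfe

section Outer2
variable {E : Set (Tm × Tm)} (m : ℕ)

def Psi2 (C1 P Q Y : Fml) : Prop :=
  ∀ I φ, IAp I φ C1 0 →
    (∀ kk g, IAp I (kcons kk φ) P g → IAp I (kcons kk φ) Q (g+1)) →
    IAp I φ Y m

def Ps2 (_ : ℕ) (B : Fml) : Prop :=
  ∃ C1 P Q Y, B = .arr C1 (.arr (.all1 (.arr P Q)) Y) ∧
    ((IsPv C1 ∧ IsPv P ∧ IsPv Q ∧ IsPv Y ∧ Psi2 m C1 P Q Y) ∨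
      ¬ IsPv C1 ∨ ¬ IsPv P ∨ ¬ IsPv Q ∨ ¬ IsPv Y)

theorem clos_ps2 (hE' : Adequate E) (F : Bool → ℕ → Prop) : Clos E F (Ps2 m) where
  hSub := by
    rintro j d u B hd ⟨C1, P, Q, Y, rfl, hcase⟩
    refine ⟨C1.subst1 (upI d (sTop u)), P.subst1 (Tm.up (upI d (sTop u))),
      Q.subst1 (Tm.up (upI d (sTop u))), Y.subst1 (upI d (sTop u)), rfl, ?_⟩
    rcases hcase with ⟨h1, hP, hQ, hY, hΨ⟩ | h1 | hP | hQ | hY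
    · cases C1 with
      | pvar b1 X1 a1 =>
        cases P with
        | pvar b2 X2 a2 =>
          cases Q with
          | pvar b3 X3 a3 =>
            cases Y with
            | pvar b4 X4 a4 =>
              refine Or.inl ⟨trivial, trivial, trivial, trivial, ?_⟩
              intro I φ hx hstep
              simp only [subst1_pvar] at hx hstep ⊢
              set φ' := fun i => tmval φ (upI d (sTop u) i) with hφ'
              have hx' : IAp I φ' (.pvar b1 X1 a1) 0 := by
                rw [IAp_pvar] at hx ⊢
                exact (IA_subst I φ (upI d (sTop u)) b1 X1 a1 0).1 hx
              have hstep' : ∀ kk g, IAp I (kcons kk φ') (.pvar b2 X2 a2) g →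
                  IAp I (kcons kk φ') (.pvar b3 X3 a3) (g+1) := by
                intro kk g hh
                rw [IAp_pvar] at hh ⊢
                have h1' := (IA_subst_up I φ (upI d (sTop u)) kk b2 X2 a2 g).2 hh
                have h2 := hstep kk g (by rw [IAp_pvar]; exact h1')
                rw [IAp_pvar] at h2
                exact (IA_subst_up I φ (upI d (sTop u)) kk b3 X3 a3 (g+1)).1 h2
              have hc := hΨ I φ' hx' hstep'
              rw [IAp_pvar] at hc ⊢
              exact (IA_subst I φ (upI d (sTop u)) b4 X4 a4 m).2 hc
            | _ => exact absurd hY (by intro hc; exact hc)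
          | _ => exact absurd hQ (by intro hc; exact hc)
        | _ => exact absurd hP (by intro hc; exact hc)
      | _ => exact absurd h1 (by intro hc; exact hc)
    · exact Or.inr (Or.inl (notpv_subst1 h1 _))
    · exact Or.inr (Or.inr (Or.inl (notpv_subst1 hP _)))
    · exact Or.inr (Or.inr (Or.inr (Or.inl (notpv_subst1 hQ _))))
    · exact Or.inr (Or.inr (Or.inr (Or.inr (notpv_subst1 hY _))))
  hPs := by
    rintro j B b X k G d hF ⟨C1, P, Q, Y, rfl, hcase⟩
    refine ⟨Fml.psubst b X k G d C1, Fml.psubst b X k G (d+1) P, Fml.psubst b X k G (d+1) Q,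
      Fml.psubst b X k G d Y, rfl, ?_⟩
    rcases hcase with ⟨h1, hP, hQ, hY, hΨ⟩ | h1 | hP | hQ | hY
    · by_cases hG : IsPv G
      · cases G with
        | pvar bg Xg gargs =>
          cases C1 with
          | pvar b1 X1 a1 =>
            cases P with
            | pvar b2 X2 a2 =>
              cases Q with
              | pvar b3 X3 a3 =>
                cases Y with
                | pvar b4 X4 a4 =>
                  refine Or.inl ⟨ispv_psubst_pvarG b X k bg Xg gargs d b1 X1 a1,
                    ispv_psubst_pvarG b X k bg Xg gargs (d+1) b2 X2 a2,
                    ispv_psubst_pvarG b X k bg Xg gargs (d+1) b3 X3 a3,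
                    ispv_psubst_pvarG b X k bg Xg gargs d b4 X4 a4, ?_⟩
                  intro I φ hx hstep
                  set I' := updI I b X (Gsem I φ k bg Xg gargs d) with hI'
                  have hx' : IAp I' φ (.pvar b1 X1 a1) 0 := by
                    rw [IAp_pvar,
                      IAp_ps_transfer I φ b X k bg Xg gargs d
                        (φv := φ) (dep := 0) (fun i => rfl) b1 X1 a1 0,
                      show d + 0 = d from rfl]
                    exact hx
                  have hstep' : ∀ kk g, IAp I' (kcons kk φ) (.pvar b2 X2 a2) g →
                      IAp I' (kcons kk φ) (.pvar b3 X3 a3) (g+1) := by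
                    intro kk g hh
                    rw [IAp_pvar] at hh ⊢
                    rw [IAp_ps_transfer I φ b X k bg Xg gargs d
                      (φv := kcons kk φ) (dep := 1) (fun i => rfl) b2 X2 a2 g] at hh
                    rw [IAp_ps_transfer I φ b X k bg Xg gargs d
                      (φv := kcons kk φ) (dep := 1) (fun i => rfl) b3 X3 a3 (g+1)]
                    exact hstep kk g hh
                  have hc := hΨ I' φ hx' hstep'
                  rw [IAp_pvar] at hc
                  rw [IAp_ps_transfer I φ b X k bg Xg gargs d
                    (φv := φ) (dep := 0) (fun i => rfl) b4 X4 a4 m] at hc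
                  rw [show d + 0 = d from rfl] at hc
                  exact hc
                | _ => exact absurd hY (by intro hc; exact hc)
              | _ => exact absurd hQ (by intro hc; exact hc)
            | _ => exact absurd hP (by intro hc; exact hc)
          | _ => exact absurd h1 (by intro hc; exact hc)
        | _ => exact absurd hG (by intro hc; exact hc)
      · cases C1 with
        | pvar b1 X1 a1 =>
          cases P with
          | pvar b2 X2 a2 =>
            cases Q with
            | pvar b3 X3 a3 =>
              cases Y with
              | pvar b4 X4 a4 =>
                by_cases k1 : IsPv (Fml.psubst b X k G d (.pvar b1 X1 a1))
                · by_cases k2 : IsPv (Fml.psubst b X k G (d+1) (.pvar b2 X2 a2))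
                  · by_cases k3 : IsPv (Fml.psubst b X k G (d+1) (.pvar b3 X3 a3))
                    · by_cases k4 : IsPv (Fml.psubst b X k G d (.pvar b4 X4 a4))
                      · rw [psubst_atom_id_of_nonpvG hG b X k d b1 X1 a1 k1,
                          psubst_atom_id_of_nonpvG hG b X k (d+1) b2 X2 a2 k2,
                          psubst_atom_id_of_nonpvG hG b X k (d+1) b3 X3 a3 k3,
                          psubst_atom_id_of_nonpvG hG b X k d b4 X4 a4 k4]
                        exact Or.inl ⟨trivial, trivial, trivial, trivial, hΨ⟩
                      · exact Or.inr (Or.inr (Or.inr (Or.inr k4)))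
                    · exact Or.inr (Or.inr (Or.inr (Or.inl k3)))
                  · exact Or.inr (Or.inr (Or.inl k2))
                · exact Or.inr (Or.inl k1)
              | _ => exact absurd hY (by intro hc; exact hc)
            | _ => exact absurd hQ (by intro hc; exact hc)
          | _ => exact absurd hP (by intro hc; exact hc)
        | _ => exact absurd h1 (by intro hc; exact hc)
    · exact Or.inr (Or.inl (notpv_psubst h1 b X k G d))
    · exact Or.inr (Or.inr (Or.inl (notpv_psubst hP b X k G (d+1))))
    · exact Or.inr (Or.inr (Or.inr (Or.inl (notpv_psubst hQ b X k G (d+1)))))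
    · exact Or.inr (Or.inr (Or.inr (Or.inr (notpv_psubst hY b X k G d))))
  hFeq := by
    rintro j B B' ⟨C1, P, Q, Y, rfl, hcase⟩ hfe
    obtain ⟨C1', W', rfl, hf1, hfW⟩ := feq_arr_inv hfe
    obtain ⟨M', Y', rfl, hfM, hfY⟩ := feq_arr_inv hfW
    obtain ⟨W2', rfl, hfW2⟩ := feq_all1_inv hfM
    obtain ⟨P', Q', rfl, hfP, hfQ⟩ := feq_arr_inv hfW2
    refine ⟨C1', P', Q', Y', rfl, ?_⟩
    rcases hcase with ⟨h1, hP, hQ, hY, hΨ⟩ | h1 | hP | hQ | hY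
    · cases C1 with
      | pvar b1 X1 a1 =>
        cases P with
        | pvar b2 X2 a2 =>
          cases Q with
          | pvar b3 X3 a3 =>
            cases Y with
            | pvar b4 X4 a4 =>
              obtain ⟨a1', rfl, hg1⟩ := feq_pvar_inv hf1
              obtain ⟨a2', rfl, hg2⟩ := feq_pvar_inv hfP
              obtain ⟨a3', rfl, hg3⟩ := feq_pvar_inv hfQ
              obtain ⟨a4', rfl, hg4⟩ := feq_pvar_inv hfY
              refine Or.inl ⟨trivial, trivial, trivial, trivial, ?_⟩
              intro I φ hx hstep
              rw [IAp_pvar] at hx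
              have hx' := (IA_feq hE' I φ b1 X1 hg1 0).2 hx
              have hstep' : ∀ kk g, IAp I (kcons kk φ) (.pvar b2 X2 a2) g →
                  IAp I (kcons kk φ) (.pvar b3 X3 a3) (g+1) := by
                intro kk g hh
                rw [IAp_pvar] at hh ⊢
                have h1' := (IA_feq hE' I (kcons kk φ) b2 X2 hg2 g).1 hh
                have h2 := hstep kk g (by rw [IAp_pvar]; exact h1')
                rw [IAp_pvar] at h2
                exact (IA_feq hE' I (kcons kk φ) b3 X3 hg3 (g+1)).2 h2
              have hc := hΨ I φ (by rw [IAp_pvar]; exact hx') hstep'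
              rw [IAp_pvar] at hc ⊢
              exact (IA_feq hE' I φ b4 X4 hg4 m).1 hc
            | _ => exact absurd hY (by intro hc; exact hc)
          | _ => exact absurd hQ (by intro hc; exact hc)
        | _ => exact absurd hP (by intro hc; exact hc)
      | _ => exact absurd h1 (by intro hc; exact hc)
    · exact Or.inr (Or.inl (notpv_feq h1 hf1))
    · exact Or.inr (Or.inr (Or.inl (notpv_feq hP hfP)))
    · exact Or.inr (Or.inr (Or.inr (Or.inl (notpv_feq hQ hfQ))))
    · exact Or.inr (Or.inr (Or.inr (Or.inr (notpv_feq hY hfY))))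
  hPeel1 := by rintro j A u ⟨C1, P, Q, Y, heq, -⟩; exact absurd heq (by simp)
  hPeel2 := by rintro j A b X k G ⟨C1, P, Q, Y, heq, -⟩; exact absurd heq (by simp)

end Outer2


/-! ### `m = 0` outer families -/

section OuterZ
variable {E : Set (Tm × Tm)}
variable (ba : Bool) (Xa : ℕ) (argsA : List Tm) (n : ℕ)

def Psi01 (jc : ℕ) (Y : Fml) : Prop :=
  ∀ I φ, IA I φ ba Xa (argsA.map (Tm.liftBy 0 jc)) 0 → IAp I φ Y 0

def P1z (jc : ℕ) (B : Fml) : Prop :=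
  ∃ X Y, B = .arr X Y ∧ ((IsPv Y ∧ Psi01 ba Xa argsA jc Y) ∨ ¬ IsPv Y)

theorem clos_p1z (hE' : Adequate E) : Clos E (F1c ba Xa argsA n) (P1z ba Xa argsA) where
  hSub := by
    rintro j d u B hd ⟨X, Y, rfl, hcase⟩
    refine ⟨_, Y.subst1 (upI d (sTop u)), rfl, ?_⟩
    rcases hcase with ⟨hY, hΨ⟩ | hY
    · cases Y with
      | pvar b4 X4 a4 =>
        refine Or.inl ⟨trivial, ?_⟩
        intro I φ hx
        simp only [subst1_pvar]
        have hx' : IA I (fun i => tmval φ (upI d (sTop u) i)) ba Xa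
            (argsA.map (Tm.liftBy 0 (j+1))) 0 := by
          have h1 := (IA_adm I φ (j+1) d u (by omega) ba Xa argsA 0).2
          have h2 : j + 1 - 1 = j := by omega
          rw [h2] at h1
          exact h1 hx
        have hc := hΨ I _ hx'
        rw [IAp_pvar] at hc ⊢
        exact (IA_subst I φ (upI d (sTop u)) b4 X4 a4 0).2 hc
      | _ => exact absurd hY (by intro hc; exact hc)
    · exact Or.inr (notpv_subst1 hY _)
  hPs := by
    rintro j B b X k G d hF ⟨X0, Y, rfl, hcase⟩
    refine ⟨_, Fml.psubst b X k G d Y, rfl, ?_⟩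
    rcases hcase with ⟨hY, hΨ⟩ | hY
    · by_cases hG : IsPv G
      · cases G with
        | pvar bg Xg gargs =>
          cases Y with
          | pvar b4 X4 a4 =>
            refine Or.inl ⟨ispv_psubst_pvarG b X k bg Xg gargs d b4 X4 a4, ?_⟩
            intro I φ hx
            have hne : ¬ (ba = b ∧ Xa = X) := by
              rintro ⟨rfl, rfl⟩
              exact hF (protA1 ba Xa argsA n)
            have hx' : IA (updI I b X (Gsem I φ k bg Xg gargs d)) φ ba Xa
                (argsA.map (Tm.liftBy 0 j)) 0 := (IA_updI_miss I _ φ hne _ 0).2 hx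
            have hc := hΨ _ φ hx'
            rw [IAp_pvar] at hc
            rw [IAp_ps_transfer I φ b X k bg Xg gargs d
              (φv := φ) (dep := 0) (fun i => rfl) b4 X4 a4 0] at hc
            rw [show d + 0 = d from rfl] at hc
            exact hc
          | _ => exact absurd hY (by intro hc; exact hc)
        | _ => exact absurd hG (by intro hc; exact hc)
      · cases Y with
        | pvar b4 X4 a4 =>
          by_cases k4 : IsPv (Fml.psubst b X k G d (.pvar b4 X4 a4))
          · rw [psubst_atom_id_of_nonpvG hG b X k d b4 X4 a4 k4]
            exact Or.inl ⟨trivial, hΨ⟩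
          · exact Or.inr k4
        | _ => exact absurd hY (by intro hc; exact hc)
    · exact Or.inr (notpv_psubst hY b X k G d)
  hFeq := by
    rintro j B B' ⟨X0, Y, rfl, hcase⟩ hfe
    obtain ⟨X0', Y', rfl, hfX, hfY⟩ := feq_arr_inv hfe
    refine ⟨X0', Y', rfl, ?_⟩
    rcases hcase with ⟨hY, hΨ⟩ | hY
    · cases Y with
      | pvar b4 X4 a4 =>
        obtain ⟨a4', rfl, hg4⟩ := feq_pvar_inv hfY
        refine Or.inl ⟨trivial, ?_⟩
        intro I φ hx
        have hc := hΨ I φ hx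
        rw [IAp_pvar] at hc ⊢
        exact (IA_feq hE' I φ b4 X4 hg4 0).1 hc
      | _ => exact absurd hY (by intro hc; exact hc)
    · exact Or.inr (notpv_feq hY hfY)
  hPeel1 := by rintro j A u ⟨X0, Y, heq, -⟩; exact absurd heq (by simp)
  hPeel2 := by rintro j A b X k G ⟨X0, Y, heq, -⟩; exact absurd heq (by simp)

def Psi02 (C1 Y : Fml) : Prop := ∀ I φ, IAp I φ C1 0 → IAp I φ Y 0

def P2z (_ : ℕ) (B : Fml) : Prop :=
  ∃ C1 M Y, B = .arr C1 (.arr M Y) ∧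
    ((IsPv C1 ∧ IsPv Y ∧ Psi02 C1 Y) ∨ ¬ IsPv C1 ∨ ¬ IsPv Y)

theorem clos_p2z (hE' : Adequate E) (F : Bool → ℕ → Prop) : Clos E F P2z where
  hSub := by
    rintro j d u B hd ⟨C1, M, Y, rfl, hcase⟩
    refine ⟨C1.subst1 (upI d (sTop u)), _, Y.subst1 (upI d (sTop u)), rfl, ?_⟩
    rcases hcase with ⟨h1, hY, hΨ⟩ | h1 | hY
    · cases C1 with
      | pvar b1 X1 a1 =>
        cases Y with
        | pvar b4 X4 a4 =>
          refine Or.inl ⟨trivial, trivial, ?_⟩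
          intro I φ hx
          simp only [subst1_pvar] at hx ⊢
          rw [IAp_pvar] at hx ⊢
          have hx' := (IA_subst I φ (upI d (sTop u)) b1 X1 a1 0).1 hx
          have hc := hΨ I _ (by rw [IAp_pvar]; exact hx')
          rw [IAp_pvar] at hc
          exact (IA_subst I φ (upI d (sTop u)) b4 X4 a4 0).2 hc
        | _ => exact absurd hY (by intro hc; exact hc)
      | _ => exact absurd h1 (by intro hc; exact hc)
    · exact Or.inr (Or.inl (notpv_subst1 h1 _))
    · exact Or.inr (Or.inr (notpv_subst1 hY _))
  hPs := by
    rintro j B b X k G d hF ⟨C1, M, Y, rfl, hcase⟩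
    refine ⟨Fml.psubst b X k G d C1, _, Fml.psubst b X k G d Y, rfl, ?_⟩
    rcases hcase with ⟨h1, hY, hΨ⟩ | h1 | hY
    · by_cases hG : IsPv G
      · cases G with
        | pvar bg Xg gargs =>
          cases C1 with
          | pvar b1 X1 a1 =>
            cases Y with
            | pvar b4 X4 a4 =>
              refine Or.inl ⟨ispv_psubst_pvarG b X k bg Xg gargs d b1 X1 a1,
                ispv_psubst_pvarG b X k bg Xg gargs d b4 X4 a4, ?_⟩
              intro I φ hx
              set I' := updI I b X (Gsem I φ k bg Xg gargs d) with hI'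
              have hx' : IAp I' φ (.pvar b1 X1 a1) 0 := by
                rw [IAp_pvar,
                  IAp_ps_transfer I φ b X k bg Xg gargs d
                    (φv := φ) (dep := 0) (fun i => rfl) b1 X1 a1 0,
                  show d + 0 = d from rfl]
                exact hx
              have hc := hΨ I' φ hx'
              rw [IAp_pvar] at hc
              rw [IAp_ps_transfer I φ b X k bg Xg gargs d
                (φv := φ) (dep := 0) (fun i => rfl) b4 X4 a4 0] at hc
              rw [show d + 0 = d from rfl] at hc
              exact hc
            | _ => exact absurd hY (by intro hc; exact hc)
          | _ => exact absurd h1 (by intro hc; exact hc)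
        | _ => exact absurd hG (by intro hc; exact hc)
      · cases C1 with
        | pvar b1 X1 a1 =>
          cases Y with
          | pvar b4 X4 a4 =>
            by_cases k1 : IsPv (Fml.psubst b X k G d (.pvar b1 X1 a1))
            · by_cases k4 : IsPv (Fml.psubst b X k G d (.pvar b4 X4 a4))
              · rw [psubst_atom_id_of_nonpvG hG b X k d b1 X1 a1 k1,
                  psubst_atom_id_of_nonpvG hG b X k d b4 X4 a4 k4]
                exact Or.inl ⟨trivial, trivial, hΨ⟩
              · exact Or.inr (Or.inr k4)
            · exact Or.inr (Or.inl k1)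
          | _ => exact absurd hY (by intro hc; exact hc)
        | _ => exact absurd h1 (by intro hc; exact hc)
    · exact Or.inr (Or.inl (notpv_psubst h1 b X k G d))
    · exact Or.inr (Or.inr (notpv_psubst hY b X k G d))
  hFeq := by
    rintro j B B' ⟨C1, M, Y, rfl, hcase⟩ hfe
    obtain ⟨C1', W', rfl, hf1, hfW⟩ := feq_arr_inv hfe
    obtain ⟨M', Y', rfl, hfM, hfY⟩ := feq_arr_inv hfW
    refine ⟨C1', M', Y', rfl, ?_⟩
    rcases hcase with ⟨h1, hY, hΨ⟩ | h1 | hY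
    · cases C1 with
      | pvar b1 X1 a1 =>
        cases Y with
        | pvar b4 X4 a4 =>
          obtain ⟨a1', rfl, hg1⟩ := feq_pvar_inv hf1
          obtain ⟨a4', rfl, hg4⟩ := feq_pvar_inv hfY
          refine Or.inl ⟨trivial, trivial, ?_⟩
          intro I φ hx
          rw [IAp_pvar] at hx
          have hx' := (IA_feq hE' I φ b1 X1 hg1 0).2 hx
          have hc := hΨ I φ (by rw [IAp_pvar]; exact hx')
          rw [IAp_pvar] at hc ⊢
          exact (IA_feq hE' I φ b4 X4 hg4 0).1 hc
        | _ => exact absurd hY (by intro hc; exact hc)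
      | _ => exact absurd h1 (by intro hc; exact hc)
    · exact Or.inr (Or.inl (notpv_feq h1 hf1))
    · exact Or.inr (Or.inr (notpv_feq hY hfY))
  hPeel1 := by rintro j A u ⟨C1, M, Y, heq, -⟩; exact absurd heq (by simp)
  hPeel2 := by rintro j A b X k G ⟨C1, M, Y, heq, -⟩; exact absurd heq (by simp)

end OuterZ


/-! ### Final assembly -/

theorem main {E : Set (Tm × Tm)} (hE : Adequate E) (n m : ℕ)
    (h : DerB E [C0f n] (.app (.var 0) (church m)) botF) : n = m := by
  obtain ⟨v0, w1, w2, v, hder, hv0, hw1, hw2, hv⟩ := top_extract h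
  have hg1 := gen hder [C0f n] 0 (liftCtx_zero _).symm
  obtain ⟨l1, A1, B1, hin1, hch2⟩ := hg1
  rw [liftCtx_C0] at hin1
  have hg2 := gen hin1 [A1, C0f n] 0 (liftCtx_zero _).symm
  obtain ⟨l2, A2, B2, hin2, hch1⟩ := hg2
  -- decompose the outer chain and read off the shape of `A1`, `B1`
  have hpd2 : GFam (fvC [C0f n]) (Ppair E (fvC [C0f n]) l1 A1 B1) 0
      (Fml.all2 false 0 1 (.arr (.pvar false 0 [v0])
        (.arr (.all1 (.arr (.pvar false 0 [w1]) (.pvar false 0 [w2])))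
          (.pvar false 0 [v])))) := pair_decomp hch2
  have hbody : GFam (fvC [C0f n]) (Ppair E (fvC [C0f n]) l1 A1 B1) 0
      (.arr (.pvar false 0 [v0])
        (.arr (.all1 (.arr (.pvar false 0 [w1]) (.pvar false 0 [w2])))
          (.pvar false 0 [v]))) := by
    cases hpd2 with
    | core hP => obtain ⟨X, Y, heq, -⟩ := hP; exact absurd heq (by simp)
    | w2 b X k hF hprem => exact hprem
  obtain ⟨X, Y, heqT, hPF2⟩ := gfam_arr_core hbody
  injection heqT with h1 h2
  subst h1; subst h2
  have hflowA1 : CFlow E (fvC [C0f n]) A1 (.pvar false 0 [v0]) := pairflow_left hPF2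
  have hflowB1 : CFlow E (fvC [C0f n]) B1
      (.arr (.all1 (.arr (.pvar false 0 [w1]) (.pvar false 0 [w2])))
        (.pvar false 0 [v])) := pairflow_right hPF2
  obtain ⟨ba, Xa, argsA, rfl⟩ : ∃ b X args, A1 = Fml.pvar b X args := by
    cases A1 with
    | pvar b X args => exact ⟨b, X, args, rfl⟩
    | arr P0 Q0 => obtain ⟨_, _, heq, -, -⟩ := cflow_arr hflowA1; exact absurd heq (by simp)
    | all1 W => obtain ⟨_, heq, -⟩ := cflow_all1 hflowA1; exact absurd heq (by simp)
    | all2 b X k W => obtain ⟨_, heq⟩ := cflow_all2 hflowA1; exact absurd heq (by simp)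
  have hpd1 := pair_decomp hch1
  obtain ⟨D1, D2, rfl, hPF1⟩ : ∃ D1 D2, B1 = .arr D1 D2 ∧
      PairFlow E (fvC [Fml.pvar ba Xa argsA, C0f n]) (l2, A2, B2) (0, D1, D2) := by
    cases hpd1 with
    | core hP => obtain ⟨D1, D2, heq, hf⟩ := hP; exact ⟨D1, D2, heq, hf⟩
    | w1 hprem => obtain ⟨_, heq, -⟩ := cflow_all1 hflowB1; exact absurd heq (by simp)
    | w2 b X k hF hprem => obtain ⟨_, heq⟩ := cflow_all2 hflowB1; exact absurd heq (by simp)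
  have hflowD1 : CFlow E (fvC [C0f n]) D1
      (.all1 (.arr (.pvar false 0 [w1]) (.pvar false 0 [w2]))) := by
    obtain ⟨S', V', heq2, hfD, -⟩ := cflow_arr hflowB1
    injection heq2 with h1 h2
    rw [← h1] at hfD
    exact hfD
  -- the final numeric interpretation
  set I0 : Bool → ℕ → List ℕ → ℕ → Prop := fun _ _ ds g => ds = [g] with hI0
  set φ0 : ℕ → ℕ := fun _ => 0 with hφ0
  have hfinC1 : IAp I0 φ0 (.pvar false 0 [v0]) 0 := by
    rw [IAp_pvar]
    show [tmval φ0 v0] = [0]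
    rw [eqcns_tmval_eq hE hv0 φ0]
    rfl
  have hfinStep : ∀ kk g, IAp I0 (kcons kk φ0) (.pvar false 0 [w1]) g →
      IAp I0 (kcons kk φ0) (.pvar false 0 [w2]) (g+1) := by
    intro kk g hh
    rw [IAp_pvar] at hh ⊢
    have e1 : tmval (kcons kk φ0) w1 = kk := by
      rw [eqcns_tmval_eq hE hw1]; rfl
    have e2 : tmval (kcons kk φ0) w2 = kk + 1 := by
      rw [eqcns_tmval_eq hE hw2]; rfl
    have hh' : tmval (kcons kk φ0) w1 = g := by
      have : [tmval (kcons kk φ0) w1] = [g] := hh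
      simpa using this
    show [tmval (kcons kk φ0) w2] = [g+1]
    rw [e2, ← hh', e1]
  have hfinV : ∀ mfin, IAp I0 φ0 (.pvar false 0 [v]) mfin → n = mfin := by
    intro mfin hfin
    rw [IAp_pvar] at hfin
    have : [tmval φ0 v] = [mfin] := hfin
    have h2 : tmval φ0 v = mfin := by simpa using this
    rw [eqcns_tmval_eq hE hv φ0, tmval_snum] at h2
    exact h2
  cases m with
  | zero =>
    -- the `m = 0` pipeline, with arbitrary `A2`
    have hInn := inner0_thm ba Xa argsA A2 n l2 hE 0 B2
      (by rw [liftCtx_zero]; exact hin2)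
    have hP1z0 : P1z ba Xa argsA l2 (.arr A2 B2) := by
      refine ⟨A2, B2, rfl, ?_⟩
      cases hInn with
      | core hP =>
        obtain ⟨b', X', args', rfl, -, hcl⟩ := hP
        refine Or.inl ⟨trivial, ?_⟩
        intro I φ hx
        rw [IAp_pvar]
        refine hcl I φ ?_
        rw [Nat.zero_add]
        exact hx
      | w1 _ => exact Or.inr (by intro hc; exact hc)
      | w2 b X k hF hprem => exact Or.inr (by intro hc; exact hc)
    have hg1z := star_invariant (clos_p1z ba Xa argsA n hE) hch1 hP1z0
    obtain ⟨X0, Y0, heq0, hdis⟩ := gfam_arr_core hg1z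
    injection heq0 with h1 h2
    subst h1; subst h2
    have hP2z0 : P2z l1 (.arr (.pvar ba Xa argsA) (.arr D1 D2)) := by
      refine ⟨_, D1, D2, rfl, ?_⟩
      rcases hdis with ⟨hY, hΨ⟩ | hY
      · refine Or.inl ⟨trivial, hY, ?_⟩
        intro I φ hx
        rw [IAp_pvar] at hx
        refine hΨ I φ ?_
        rw [map_liftBy_zero]
        exact hx
      · exact Or.inr (Or.inr hY)
    have hg2z : GFam (fvC [C0f n]) P2z 0
        (Fml.all2 false 0 1 (.arr (.pvar false 0 [v0])
          (.arr (.all1 (.arr (.pvar false 0 [w1]) (.pvar false 0 [w2])))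
            (.pvar false 0 [v])))) := star_invariant (clos_p2z hE (fvC [C0f n])) hch2 hP2z0
    have hbody2 : GFam (fvC [C0f n]) P2z 0
        (.arr (.pvar false 0 [v0])
          (.arr (.all1 (.arr (.pvar false 0 [w1]) (.pvar false 0 [w2])))
            (.pvar false 0 [v]))) := by
      cases hg2z with
      | core hP => obtain ⟨C1, M, Y, heq, -⟩ := hP; exact absurd heq (by simp)
      | w2 b X k hF hprem => exact hprem
    obtain ⟨C1', M', Y', heqB, hdis2⟩ := gfam_arr_core hbody2
    injection heqB with h1 h2
    injection h2 with h2a h2b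
    subst h1; subst h2a; subst h2b
    rcases hdis2 with ⟨-, -, hΨ2⟩ | hbad | hbad
    · exact hfinV 0 (hΨ2 I0 φ0 hfinC1)
    · exact absurd trivial hbad
    · exact absurd trivial hbad
  | succ mm =>
    -- `A2` must be an honest iterator type
    have hflowA2 : CFlow E (fvC [Fml.pvar ba Xa argsA, C0f n]) A2 D1 := pairflow_left hPF1
    -- case analysis on the shape of `A2`
    cases A2 with
    | pvar zb zX zargs =>
      exfalso
      refine stuck_kill (E := E) ba Xa argsA (Fml.pvar zb zX zargs) n l2 (l2' := 0)
        (Or.inl ⟨zargs, rfl⟩)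
        ⟨Fml.pvar zb zX zargs, by unfold Dctx0; simp, ⟨rfl, rfl⟩⟩
        (mm := mm) (l := 0) (B := B2) ?_
      rw [liftCtx_zero]
      exact hin2
    | arr P0 Q0 =>
      exfalso
      obtain ⟨P1', Q1', rfl, -, -⟩ := cflow_arr hflowA2
      obtain ⟨_, _, heq, -, -⟩ := cflow_arr hflowD1
      exact absurd heq (by simp)
    | all2 zb zX zk W =>
      exfalso
      obtain ⟨W', rfl⟩ := cflow_all2 hflowA2
      obtain ⟨_, heq⟩ := cflow_all2 hflowD1
      exact absurd heq (by simp)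
    | all1 W =>
      obtain ⟨W1, rfl, hflowW⟩ := cflow_all1 hflowA2
      obtain ⟨SB, heqS, hflowW1⟩ := cflow_all1 hflowD1
      injection heqS with hSB
      subst hSB
      cases W with
      | pvar zb zX zargs =>
        exfalso
        refine stuck_kill (E := E) ba Xa argsA (.all1 (.pvar zb zX zargs)) n l2 (l2' := 0)
          (Or.inr ⟨zargs, rfl⟩)
          ⟨Fml.all1 (.pvar zb zX zargs), by unfold Dctx0; simp, ⟨rfl, rfl⟩⟩
          (mm := mm) (l := 0) (B := B2) ?_
        rw [liftCtx_zero]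
        exact hin2
      | all1 W0 =>
        exfalso
        obtain ⟨W2, rfl, -⟩ := cflow_all1 hflowW
        obtain ⟨_, heq, -⟩ := cflow_all1 hflowW1
        exact absurd heq (by simp)
      | all2 zb zX zk W0 =>
        exfalso
        obtain ⟨W2, rfl⟩ := cflow_all2 hflowW
        obtain ⟨_, heq⟩ := cflow_all2 hflowW1
        exact absurd heq (by simp)
      | arr P0 Q0 =>
        obtain ⟨P1', Q1', rfl, hfP0, hfQ0⟩ := cflow_arr hflowW
        obtain ⟨P2', Q2', heq2, hfP1, hfQ1⟩ := cflow_arr hflowW1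
        injection heq2 with hP2 hQ2
        subst hP2; subst hQ2
        obtain ⟨zcb, zc, cargs, rfl⟩ : ∃ b X args, P0 = Fml.pvar b X args := by
          cases hc : P0 with
          | pvar b X args => exact ⟨b, X, args, rfl⟩
          | _ =>
            exfalso
            subst hc
            exact cflow_notpv hfP1 (cflow_notpv hfP0 (by intro hcc; exact hcc)) trivial
        obtain ⟨zdb, zd, dargs, rfl⟩ : ∃ b X args, Q0 = Fml.pvar b X args := by
          cases hc : Q0 with
          | pvar b X args => exact ⟨b, X, args, rfl⟩
          | _ =>
            exfalso
            subst hc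
            exact cflow_notpv hfQ1 (cflow_notpv hfQ0 (by intro hcc; exact hcc)) trivial
        -- the main pipeline
        have hInn := inner_thm ba Xa argsA zcb zc cargs zdb zd dargs n l2 hE (mm+1) 0 B2
          (by rw [liftCtx_zero]; exact hin2)
        have hPs10 : Ps1 ba Xa argsA (mm+1) l2
            (.arr (.all1 (.arr (.pvar zcb zc cargs) (.pvar zdb zd dargs))) B2) := by
          refine ⟨.pvar zcb zc cargs, .pvar zdb zd dargs, B2, rfl, ?_⟩
          cases hInn with
          | core hP =>
            obtain ⟨b', X', args', rfl, -, hcl⟩ := hP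
            refine Or.inl ⟨trivial, trivial, trivial, ?_⟩
            intro I φ hx hstep
            rw [IAp_pvar]
            refine hcl I φ ⟨?_, ?_⟩
            · rw [Nat.zero_add]
              exact hx
            · intro kk g hh
              rw [map_liftBy_zero] at hh
              have h2 := hstep kk g ((IAp_pvar I _ zcb zc cargs g).2 hh)
              rw [IAp_pvar] at h2
              rw [map_liftBy_zero]
              exact h2
          | w1 _ => exact Or.inr (Or.inr (Or.inr (by intro hc; exact hc)))
          | w2 b X k hF hprem => exact Or.inr (Or.inr (Or.inr (by intro hc; exact hc)))
        have hg1s := star_invariant (clos_ps1 ba Xa argsA n (mm+1) hE) hch1 hPs10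
        obtain ⟨P', Q', Y', heq0, hdis⟩ := gfam_arr_core hg1s
        injection heq0 with h1 h2
        have hPs20 : Ps2 (mm+1) l1
            (.arr (.pvar ba Xa argsA) (.arr (.all1 (.arr P1' Q1')) D2)) := by
          refine ⟨.pvar ba Xa argsA, P', Q', Y', by rw [h1, h2], ?_⟩
          rcases hdis with ⟨hP, hQ, hY, hΨ⟩ | hP | hQ | hY
          · refine Or.inl ⟨trivial, hP, hQ, hY, ?_⟩
            intro I φ hx hstep
            rw [IAp_pvar] at hx
            refine hΨ I φ ?_ hstep
            rw [map_liftBy_zero]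
            exact hx
          · exact Or.inr (Or.inr (Or.inl hP))
          · exact Or.inr (Or.inr (Or.inr (Or.inl hQ)))
          · exact Or.inr (Or.inr (Or.inr (Or.inr hY)))
        have hg2s : GFam (fvC [C0f n]) (Ps2 (mm+1)) 0
            (Fml.all2 false 0 1 (.arr (.pvar false 0 [v0])
              (.arr (.all1 (.arr (.pvar false 0 [w1]) (.pvar false 0 [w2])))
                (.pvar false 0 [v])))) := star_invariant (clos_ps2 (mm+1) hE (fvC [C0f n])) hch2 hPs20
        have hbody2 : GFam (fvC [C0f n]) (Ps2 (mm+1)) 0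
            (.arr (.pvar false 0 [v0])
              (.arr (.all1 (.arr (.pvar false 0 [w1]) (.pvar false 0 [w2])))
                (.pvar false 0 [v]))) := by
          cases hg2s with
          | core hP => obtain ⟨C1, P2, Q2, Y2, heq, -⟩ := hP; exact absurd heq (by simp)
          | w2 b X k hF hprem => exact hprem
        obtain ⟨C1', P'', Q'', Y'', heqB, hdis2⟩ := gfam_arr_core hbody2
        injection heqB with h1 h2
        injection h2 with h2a h2b
        injection h2a with h2c
        injection h2c with h2d h2e
        subst h1
        subst h2d
        subst h2e
        subst h2b
        rcases hdis2 with ⟨-, -, -, -, hΨ2⟩ | hbad | hbad | hbad | hbad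
        · exact hfinV (mm+1) (hΨ2 I0 φ0 hfinC1 hfinStep)
        all_goals exact absurd trivial hbad

end AF2Aux


/-- If `f : ¬N[sⁿ(0)] ⊢⊥ (f)m̲ : ⊥` in AF2⊥ over an adequate set of equations,
then `n = m`. -/
theorem app_church_bot_typing_forces_eq (E : Set (Tm × Tm)) (hE : Adequate E)
    (n m : ℕ) (h : DerB E [negF (Nty (snum n))] (.app (.var 0) (church m)) botF) :
    n = m := AF2Aux.main hE n m h
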